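/- arXiv:1511.00700 — 7 statements merged into one kernel-verified Lean document; each statement's English description precedes it below -/
import Mathlib

section
/- Let V ⊆ {1,...,p}^d be a set of vectors all of the same squared Euclidean norm, let k ≥ 2, q = (k+1)p, and let f(v) = Σ_i v_i q^{i-1}. Then the image A = f(V) ⊆ ℕ is k-average-free: for any a_1, ..., a_k ∈ A not all equal and any ā ∈ A, a_1 + ... + a_k ≠ k·ā. -/
lemma digits_inj (q : ℕ) : ∀ (n : ℕ) (u u' : Fin n → ℕ),
    (∀ i, u i < q) → (∀ i, u' i < q) →
    (∑ i, u i * q ^ (i : ℕ)) = (∑ i, u' i * q ^ (i : ℕ)) → u = u' := by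
  intro n
  induction n with
  | zero => intro u u' _ _ _; funext i; exact absurd i.2 (Nat.not_lt_zero _)
  | succ n ih =>
    intro u u' hu hu' h
    have hq : 0 < q := lt_of_le_of_lt (Nat.zero_le _) (hu 0)
    rw [Fin.sum_univ_succ, Fin.sum_univ_succ] at h
    simp only [Fin.val_succ, pow_succ, pow_zero, mul_one] at h
    have h' : u 0 + (∑ i : Fin n, u i.succ * q ^ (i : ℕ)) * q
        = u' 0 + (∑ i : Fin n, u' i.succ * q ^ (i : ℕ)) * q := by
      rw [Finset.sum_mul, Finset.sum_mul]
      simpa [mul_assoc] using h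
    have h0 : u 0 = u' 0 := by
      have := congrArg (· % q) h'
      simpa [Nat.add_mul_mod_self_right, Nat.mod_eq_of_lt (hu 0),
        Nat.mod_eq_of_lt (hu' 0)] using this
    have hrest : (∑ i : Fin n, u i.succ * q ^ (i : ℕ)) = ∑ i : Fin n, u' i.succ * q ^ (i : ℕ) := by
      have := h'
      rw [h0] at this
      have := Nat.add_left_cancel this
      exact Nat.eq_of_mul_eq_mul_right hq this
    have := ih (fun i => u i.succ) (fun i => u' i.succ) (fun i => hu _) (fun i => hu' _) hrest
    funext i
    rcases Fin.eq_zero_or_eq_succ i with h | ⟨j, rfl⟩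
    · rw [h]; exact h0
    · exact congrFun this j

theorem image_of_sphere_is_k_average_free (p k d : ℕ) (hp : 1 ≤ p) (hk : 2 ≤ k) (hd : 1 ≤ d)
    (V : Finset (Fin d → ℕ)) (hV : ∀ v ∈ V, ∀ i, v i ∈ Finset.Icc 1 p)
    (r : ℕ) (hnorm : ∀ v ∈ V, ∑ i, (v i) ^ 2 = r) :
    ∀ a : Fin k → ℕ,
      (∀ i, a i ∈ V.image (fun v => ∑ i : Fin d, v i * ((k + 1) * p) ^ (i : ℕ))) →
      (∃ i j, a i ≠ a j) →
      ∀ abar ∈ V.image (fun v => ∑ i : Fin d, v i * ((k + 1) * p) ^ (i : ℕ)),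
        ∑ i, a i ≠ k * abar := by
  intro a ha hne abar habar heq
  set q := (k + 1) * p with hqdef
  simp only [Finset.mem_image] at ha habar
  choose v hvV hvf using ha
  obtain ⟨w, hwV, hwf⟩ := habar
  -- bounds
  have hbound : ∀ u ∈ V, ∀ i, 1 ≤ u i ∧ u i ≤ p := by
    intro u hu i; exact Finset.mem_Icc.mp (hV u hu i)
  -- digit sums
  have hsum1 : (∑ j, a j) = ∑ i : Fin d, (∑ j : Fin k, v j i) * q ^ (i : ℕ) := by
    simp only [← hvf]
    rw [Finset.sum_comm]
    simp [Finset.sum_mul]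
  have hsum2 : k * abar = ∑ i : Fin d, (k * w i) * q ^ (i : ℕ) := by
    rw [← hwf, Finset.mul_sum]
    simp [mul_assoc]
  have hlt1 : ∀ i : Fin d, (∑ j : Fin k, v j i) < q := by
    intro i
    calc (∑ j : Fin k, v j i) ≤ ∑ j : Fin k, p :=
          Finset.sum_le_sum (fun j _ => (hbound _ (hvV j) i).2)
      _ = k * p := by simp [mul_comm]
      _ < (k + 1) * p :=
          (Nat.mul_lt_mul_right (Nat.lt_of_lt_of_le Nat.zero_lt_one hp)).mpr (Nat.lt_succ_self k)
  have hlt2 : ∀ i : Fin d, k * w i < q := by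
    intro i
    calc k * w i ≤ k * p := Nat.mul_le_mul_left k (hbound _ hwV i).2
      _ < (k + 1) * p :=
          (Nat.mul_lt_mul_right (Nat.lt_of_lt_of_le Nat.zero_lt_one hp)).mpr (Nat.lt_succ_self k)
  have hdig : (fun i : Fin d => ∑ j : Fin k, v j i) = fun i => k * w i := by
    apply digits_inj q d _ _ hlt1 hlt2
    rw [← hsum1, ← hsum2, heq]
  have hcomp : ∀ i : Fin d, (∑ j : Fin k, v j i) = k * w i := fun i => congrFun hdig i
  -- norm argument in ℤ
  have h1 : ∀ j : Fin k, (∑ i : Fin d, ((v j i : ℤ))^2) = (r : ℤ) := by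
    intro j; exact_mod_cast hnorm _ (hvV j)
  have hw1 : (∑ i : Fin d, ((w i : ℤ))^2) = (r : ℤ) := by exact_mod_cast hnorm _ hwV
  have h2 : ∀ i : Fin d, (∑ j : Fin k, ((v j i : ℤ))) = (k : ℤ) * w i := by
    intro i; exact_mod_cast hcomp i
  have key : ∑ j : Fin k, ∑ l : Fin k, ∑ i : Fin d, ((v j i : ℤ) - v l i)^2 = 0 := by
    have expand : ∀ j l : Fin k, ∑ i : Fin d, ((v j i : ℤ) - v l i)^2
        = (r : ℤ) + r - 2 * ∑ i : Fin d, (v j i : ℤ) * v l i := by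
      intro j l
      have : ∑ i : Fin d, ((v j i : ℤ) - v l i)^2
          = (∑ i : Fin d, (v j i : ℤ)^2) + (∑ i : Fin d, (v l i : ℤ)^2)
            - 2 * ∑ i : Fin d, (v j i : ℤ) * v l i := by
        rw [← Finset.sum_add_distrib, Finset.mul_sum, ← Finset.sum_sub_distrib]
        apply Finset.sum_congr rfl
        intro i _; ring
      rw [this, h1, h1]
    simp only [expand]
    have hcross : ∑ j : Fin k, ∑ l : Fin k, ∑ i : Fin d, (v j i : ℤ) * v l i
        = (k : ℤ)^2 * r := by
      calc ∑ j : Fin k, ∑ l : Fin k, ∑ i : Fin d, (v j i : ℤ) * v l i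
          = ∑ j : Fin k, ∑ i : Fin d, ∑ l : Fin k, (v j i : ℤ) * v l i :=
            Finset.sum_congr rfl (fun j _ => Finset.sum_comm)
        _ = ∑ i : Fin d, ∑ j : Fin k, ∑ l : Fin k, (v j i : ℤ) * v l i := Finset.sum_comm
        _ = ∑ i : Fin d, (∑ j : Fin k, (v j i : ℤ)) * (∑ l : Fin k, (v l i : ℤ)) := by
            apply Finset.sum_congr rfl
            intro i _
            rw [Finset.sum_mul_sum]
        _ = ∑ i : Fin d, ((k : ℤ) * w i) * ((k : ℤ) * w i) := by simp only [h2]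
        _ = (k : ℤ)^2 * ∑ i : Fin d, (w i : ℤ)^2 := by
            rw [Finset.mul_sum]
            apply Finset.sum_congr rfl
            intro i _; ring
        _ = (k : ℤ)^2 * r := by rw [hw1]
    rw [Finset.sum_comm]
    have : ∀ l : Fin k, ∑ j : Fin k, ((r : ℤ) + r - 2 * ∑ i : Fin d, (v j i : ℤ) * v l i)
        = (k : ℤ) * ((r : ℤ) + r) - 2 * ∑ j : Fin k, ∑ i : Fin d, (v j i : ℤ) * v l i := by
      intro l
      rw [Finset.sum_sub_distrib, Finset.sum_const, Finset.mul_sum]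
      simp [nsmul_eq_mul]
    simp only [this]
    rw [Finset.sum_sub_distrib, Finset.sum_const, ← Finset.mul_sum, Finset.sum_comm, hcross]
    simp [Finset.card_univ, nsmul_eq_mul]
    ring
  -- conclude all v equal
  have hvall : ∀ j l : Fin k, v j = v l := by
    intro j l
    funext i
    have h0 : ((v j i : ℤ) - v l i)^2 = 0 := by
      have hnn1 : ∀ j ∈ (Finset.univ : Finset (Fin k)),
          0 ≤ ∑ l : Fin k, ∑ i : Fin d, ((v j i : ℤ) - v l i)^2 := by
        intro j _
        exact Finset.sum_nonneg fun l _ => Finset.sum_nonneg fun i _ => sq_nonneg _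
      have e1 := (Finset.sum_eq_zero_iff_of_nonneg hnn1).mp key j (Finset.mem_univ j)
      have hnn2 : ∀ l ∈ (Finset.univ : Finset (Fin k)),
          0 ≤ ∑ i : Fin d, ((v j i : ℤ) - v l i)^2 :=
        fun l _ => Finset.sum_nonneg fun i _ => sq_nonneg _
      have e2 := (Finset.sum_eq_zero_iff_of_nonneg hnn2).mp e1 l (Finset.mem_univ l)
      exact (Finset.sum_eq_zero_iff_of_nonneg fun i _ => sq_nonneg _).mp e2 i (Finset.mem_univ i)
    have := sub_eq_zero.mp (pow_eq_zero_iff (by norm_num) |>.mp h0)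
    exact_mod_cast this
  obtain ⟨i, j, hij⟩ := hne
  apply hij
  rw [← hvf i, ← hvf j, hvall i j]
end

section
/- For every ε > 0 there exists δ > 0 such that for infinitely many N there is a k-average-free set A ⊆ {1,...,N} with |A| ≥ c·N^{1-ε} and k ≥ N^δ (for some constant c > 0 depending on ε). -/
def KAvgFree (k : ℕ) (A : Finset ℕ) : Prop :=
  ∀ a : Fin k → ℕ, (∀ i, a i ∈ A) → (∃ i j, a i ≠ a j) → ∀ b ∈ A, ∑ i, a i ≠ k * b

open Finset Behrend

lemma map_lt_pow {d B : ℕ} (hB : 1 ≤ B) {v : Fin d → ℕ} (hv : ∀ i, v i < B) :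
    Behrend.map B v < B ^ d := by
  have h1 : Behrend.map B v ≤ Behrend.map B (fun _ => B - 1) :=
    Behrend.map_monotone B fun i => Nat.le_sub_one_of_lt (hv i)
  have h2 : Behrend.map B (fun _ : Fin d => B - 1) + 1 = B ^ d := by
    have h := geom_sum_mul_add (B - 1) d
    rw [Nat.sub_add_cancel hB] at h
    simp only [Behrend.map, AddMonoidHom.coe_mk, ZeroHom.coe_mk]
    rw [← Finset.sum_range (fun i => (B - 1) * B ^ i)]
    rw [show ∑ i ∈ Finset.range d, (B - 1) * B ^ i = (∑ i ∈ Finset.range d, B ^ i) * (B - 1) by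
      rw [Finset.sum_mul]; exact Finset.sum_congr rfl fun i _ => mul_comm _ _]
    exact h
  omega

lemma sphere_rigid {d p k r : ℕ} {v : Fin k → (Fin d → ℕ)} {w : Fin d → ℕ}
    (hv : ∀ i, ∑ j, v i j ^ 2 = r) (hw : ∑ j, w j ^ 2 = r)
    (hsum : ∀ j, ∑ i, v i j = k * w j) : ∀ i, v i = w := by
  have e1 : ∀ i, ∑ j, (v i j : ℤ) ^ 2 = (r : ℤ) := fun i => by
    exact_mod_cast congrArg Nat.cast (hv i)
  have e2 : ∑ j, (w j : ℤ) ^ 2 = (r : ℤ) := by exact_mod_cast congrArg Nat.cast hw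
  have e3 : ∀ j, ∑ i, (v i j : ℤ) = (k : ℤ) * w j := fun j => by
    exact_mod_cast congrArg Nat.cast (hsum j)
  have per : ∀ i, ∑ j, ((v i j : ℤ) - w j) ^ 2
      = ∑ j, (v i j : ℤ) ^ 2 - 2 * ∑ j, (v i j : ℤ) * w j + ∑ j, (w j : ℤ) ^ 2 := by
    intro i
    simp_rw [sub_sq, Finset.sum_add_distrib, Finset.sum_sub_distrib, mul_assoc, ← Finset.mul_sum]
  have mid : ∑ i : Fin k, ∑ j : Fin d, (v i j : ℤ) * w j = (k : ℤ) * r := by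
    rw [Finset.sum_comm]
    have h : ∀ j : Fin d, ∑ i : Fin k, (v i j : ℤ) * w j = (k : ℤ) * (w j * w j) := by
      intro j
      rw [← Finset.sum_mul, e3 j]; ring
    rw [Finset.sum_congr rfl fun j _ => h j, ← Finset.mul_sum]
    congr 1
    rw [← e2]
    exact Finset.sum_congr rfl fun j _ => by ring
  have key : ∑ i : Fin k, ∑ j : Fin d, ((v i j : ℤ) - w j) ^ 2 = 0 := by
    rw [Finset.sum_congr rfl fun i _ => per i, Finset.sum_add_distrib, Finset.sum_sub_distrib,
      ← Finset.mul_sum, mid, Finset.sum_congr rfl fun i _ => e1 i, Finset.sum_const,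
      Finset.sum_const, card_univ, Fintype.card_fin, nsmul_eq_mul, nsmul_eq_mul, e2]
    ring
  intro i
  funext j
  have h1 : ∑ j : Fin d, ((v i j : ℤ) - w j) ^ 2 = 0 :=
    (Finset.sum_eq_zero_iff_of_nonneg fun i _ => Finset.sum_nonneg fun j _ => sq_nonneg _).1
      key i (mem_univ _)
  have h2 : ((v i j : ℤ) - w j) ^ 2 = 0 :=
    (Finset.sum_eq_zero_iff_of_nonneg fun j _ => sq_nonneg _).1 h1 j (mem_univ _)
  have h3 : (v i j : ℤ) = w j := by
    have := pow_eq_zero_iff (n := 2) (by norm_num) |>.1 h2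
    linarith
  exact_mod_cast h3

lemma pigeon_aux (d p m n0 : ℕ) (hd4 : 4 ≤ d) (hm2 : 2 ≤ m) (hmd : d + 1 ≤ m)
    (hp_def : p = m ^ d) (hn0_def : n0 = m ^ (d * d - 2 * d - 1))
    (hdd : 2 * d + 5 ≤ d * d) (hp2 : 2 ≤ p) :
    ∃ r ∈ Finset.Icc 1 (d * (p - 1) ^ 2),
      n0 ≤ #{x ∈ (box d p).erase 0 | (∑ j, x j ^ 2) = r} := by
  apply Finset.exists_le_card_fiber_of_mul_le_card_of_maps_to
  · intro x hx
    rw [Finset.mem_erase] at hx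
    rw [Finset.mem_Icc]
    constructor
    · have : ∃ j, x j ≠ 0 := by
        by_contra h
        push_neg at h
        exact hx.1 (funext fun j => h j)
      obtain ⟨j, hj⟩ := this
      calc 1 ≤ x j ^ 2 := Nat.one_le_iff_ne_zero.2 (pow_ne_zero _ hj)
      _ ≤ ∑ j, x j ^ 2 :=
        Finset.single_le_sum (f := fun j => x j ^ 2) (fun _ _ => Nat.zero_le _) (mem_univ j)
    · exact Behrend.sum_sq_le_of_mem_box hx.2
  · exact ⟨1, Finset.mem_Icc.2 ⟨le_refl 1,
      Nat.one_le_iff_ne_zero.2 (Nat.mul_ne_zero (by omega) (pow_ne_zero _ (by omega)))⟩⟩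
  · rw [Nat.card_Icc, Finset.card_erase_of_mem, Behrend.card_box]
    · have h1 : (d * (p - 1) ^ 2 + 1 - 1) * n0 ≤ d * m ^ (2 * d) * n0 := by
        apply Nat.mul_le_mul_right
        simp only [Nat.add_sub_cancel]
        apply Nat.mul_le_mul_left
        calc (p - 1) ^ 2 ≤ p ^ 2 := Nat.pow_le_pow_left (Nat.sub_le _ _) 2
        _ = m ^ (2 * d) := by rw [hp_def, ← pow_mul, Nat.mul_comm]
      have h2 : d * m ^ (2 * d) * n0 = d * m ^ (d * d - 1) := by
        rw [hn0_def, Nat.mul_assoc, ← pow_add,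
          show 2 * d + (d * d - 2 * d - 1) = d * d - 1 by omega]
      have h3 : d * m ^ (d * d - 1) + 1 ≤ p ^ d := by
        have hq : 1 ≤ m ^ (d * d - 1) := Nat.one_le_pow _ _ (by omega)
        have hpe : p ^ d = m ^ (d * d) := by rw [hp_def, ← pow_mul]
        have step1 : d * m ^ (d * d - 1) + 1 ≤ (d + 1) * m ^ (d * d - 1) := by
          have : (d + 1) * m ^ (d * d - 1) = d * m ^ (d * d - 1) + m ^ (d * d - 1) := by ring
          omega
        have step2 : (d + 1) * m ^ (d * d - 1) ≤ m * m ^ (d * d - 1) :=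
          Nat.mul_le_mul_right _ hmd
        have step3 : m * m ^ (d * d - 1) = m ^ (d * d) := by
          conv_rhs => rw [show d * d = (d * d - 1) + 1 from (Nat.sub_add_cancel (by omega)).symm]
          exact (pow_succ' m _).symm
        omega
      omega
    · rw [Behrend.mem_box]
      intro i
      simp only [Pi.zero_apply]
      omega

lemma kavg_aux {d p B m r : ℕ} (hpB : p ≤ B) (hmB : m * p < B) :
    KAvgFree m ((Behrend.sphere d p r).image (Behrend.map B)) := by
  intro a ha hne b hb hcontra
  have hS_box : ∀ x ∈ Behrend.sphere d p r, ∀ i, x i < p := fun x hx =>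
    Behrend.mem_box.1 (Behrend.sphere_subset_box hx)
  have hS_sphere : ∀ x ∈ Behrend.sphere d p r, ∑ j, x j ^ 2 = r := fun x hx =>
    (Finset.mem_filter.1 hx).2
  rw [Finset.mem_image] at hb
  obtain ⟨w, hw, rfl⟩ := hb
  have hchoice : ∀ i, ∃ v ∈ Behrend.sphere d p r, Behrend.map B v = a i := fun i => by
    have := ha i
    rw [Finset.mem_image] at this
    exact this
  choose v hvS hveq using hchoice
  have hsum_eq : Behrend.map B (∑ i, v i) = Behrend.map B (m • w) := by
    rw [map_sum, map_nsmul]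
    simp only [smul_eq_mul]
    rw [Finset.sum_congr rfl fun i _ => hveq i]
    exact hcontra
  have hveclt : ∀ j, (∑ i, v i) j < B := by
    intro j
    rw [Finset.sum_apply]
    calc ∑ i, v i j ≤ ∑ _i : Fin m, (p - 1) :=
      Finset.sum_le_sum fun i _ => Nat.le_sub_one_of_lt (hS_box _ (hvS i) j)
    _ = m * (p - 1) := by rw [Finset.sum_const, card_univ, Fintype.card_fin, smul_eq_mul]
    _ ≤ m * p := Nat.mul_le_mul_left _ (Nat.sub_le _ _)
    _ < B := hmB
  have hweclt : ∀ j, (m • w) j < B := by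
    intro j
    simp only [Pi.smul_apply, smul_eq_mul]
    calc m * w j ≤ m * (p - 1) := Nat.mul_le_mul_left _ (Nat.le_sub_one_of_lt (hS_box _ hw j))
    _ ≤ m * p := Nat.mul_le_mul_left _ (Nat.sub_le _ _)
    _ < B := hmB
  have hvec : ∑ i, v i = m • w :=
    Behrend.map_injOn (fun j => hveclt j) (fun j => hweclt j) hsum_eq
  have hcomp : ∀ j, ∑ i, v i j = m * w j := by
    intro j
    have := congrFun hvec j
    rw [Finset.sum_apply] at this
    simpa using this
  have hall : ∀ i, v i = w :=
    sphere_rigid (p := p) (fun i => hS_sphere _ (hvS i)) (hS_sphere _ hw) hcomp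
  obtain ⟨i, j, hij⟩ := hne
  apply hij
  rw [← hveq i, ← hveq j, hall i, hall j]

lemma subset_aux {d p B N r : ℕ} (hB1 : 1 ≤ B) (hpB : p ≤ B) (hr1 : 1 ≤ r)
    (hN_def : N = B ^ d) :
    (Behrend.sphere d p r).image (Behrend.map B) ⊆ Finset.Icc 1 N := by
  intro x hx
  rw [Finset.mem_image] at hx
  obtain ⟨v, hv, rfl⟩ := hx
  have hS_box : ∀ i, v i < p := Behrend.mem_box.1 (Behrend.sphere_subset_box hv)
  have hS_sphere : ∑ j, v j ^ 2 = r := (Finset.mem_filter.1 hv).2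
  rw [Finset.mem_Icc]
  constructor
  · by_contra h
    push_neg at h
    have h0 : Behrend.map B v = 0 := by omega
    have hterm : ∀ j ∈ (univ : Finset (Fin d)), v j * B ^ (j : ℕ) = 0 :=
      Finset.sum_eq_zero_iff.1 h0
    have hv0 : ∀ j, v j = 0 := by
      intro j
      have h1 := hterm j (mem_univ j)
      have hBj : 0 < B ^ (j : ℕ) := Nat.pow_pos (by omega)
      rcases Nat.mul_eq_zero.1 h1 with h2 | h2
      · exact h2
      · omega
    rw [Finset.sum_eq_zero (fun j _ => by rw [hv0 j]; ring)] at hS_sphere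
    omega
  · rw [hN_def]
    exact le_of_lt (map_lt_pow hB1 fun i => lt_of_lt_of_le (hS_box i) hpB)

lemma nat_N_le {d m p B N : ℕ} (hm2 : 2 ≤ m) (hp_def : p = m ^ d) (hB_def : B = (m + 1) * p)
    (hN_def : N = B ^ d) : N ≤ m ^ (d * (d + 2)) := by
  have hBle : B ≤ m ^ (d + 2) := by
    rw [hB_def, hp_def]
    calc (m + 1) * m ^ d ≤ m ^ 2 * m ^ d := Nat.mul_le_mul_right _ (by nlinarith)
    _ = m ^ (d + 2) := by rw [← pow_add]; ring_nf
  calc N = B ^ d := hN_def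
  _ ≤ (m ^ (d + 2)) ^ d := Nat.pow_le_pow_left hBle d
  _ = m ^ ((d + 2) * d) := by rw [← pow_mul]
  _ = m ^ (d * (d + 2)) := by rw [Nat.mul_comm]

lemma size_aux {ε : ℝ} {d m N n0 : ℕ} (hε : 0 < ε) (hd4 : 4 ≤ d) (hm2 : 2 ≤ m)
    (hεd : (5 : ℝ) ≤ ε * d) (hdd : 2 * d + 5 ≤ d * d)
    (hNle : N ≤ m ^ (d * (d + 2))) (hN1 : 1 ≤ N)
    (hn0_def : n0 = m ^ (d * d - 2 * d - 1)) :
    (N : ℝ) ^ ((1 : ℝ) - ε) ≤ (n0 : ℝ) := by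
  have hm1R : (1 : ℝ) ≤ (m : ℝ) := by exact_mod_cast (by omega : 1 ≤ m)
  have hN1R : (1 : ℝ) ≤ (N : ℝ) := by exact_mod_cast hN1
  have hn0R : (n0 : ℝ) = (m : ℝ) ^ ((d * d - 2 * d - 1 : ℕ) : ℝ) := by
    rw [hn0_def, Real.rpow_natCast]
    exact_mod_cast rfl
  rcases le_or_gt ε 1 with hε1 | hε1
  · have hNleR : (N : ℝ) ≤ (m : ℝ) ^ ((d * (d + 2) : ℕ) : ℝ) := by
      rw [Real.rpow_natCast]
      calc (N : ℝ) ≤ ((m ^ (d * (d + 2)) : ℕ) : ℝ) := by exact_mod_cast hNle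
      _ = (m : ℝ) ^ (d * (d + 2)) := by push_cast; ring
    calc (N : ℝ) ^ ((1 : ℝ) - ε)
        ≤ ((m : ℝ) ^ ((d * (d + 2) : ℕ) : ℝ)) ^ ((1 : ℝ) - ε) :=
          Real.rpow_le_rpow (by positivity) hNleR (by linarith)
      _ = (m : ℝ) ^ (((d * (d + 2) : ℕ) : ℝ) * ((1 : ℝ) - ε)) := by
          rw [← Real.rpow_mul (by positivity)]
      _ ≤ (m : ℝ) ^ ((d * d - 2 * d - 1 : ℕ) : ℝ) := by
          apply Real.rpow_le_rpow_of_exponent_le hm1R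
          have hcast : ((d * d - 2 * d - 1 : ℕ) : ℝ) = (d : ℝ) * d - 2 * d - 1 := by
            rw [Nat.sub_sub, Nat.cast_sub (by omega : 2 * d + 1 ≤ d * d)]
            push_cast
            ring
          rw [hcast]
          push_cast
          have hd0 : (0 : ℝ) ≤ (d : ℝ) := by positivity
          have h1 : 5 * (d : ℝ) ≤ (ε * d) * d := mul_le_mul_of_nonneg_right hεd hd0
          nlinarith
      _ = (n0 : ℝ) := hn0R.symm
  · calc (N : ℝ) ^ ((1 : ℝ) - ε) ≤ (N : ℝ) ^ (0 : ℝ) :=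
        Real.rpow_le_rpow_of_exponent_le hN1R (by linarith)
    _ = 1 := Real.rpow_zero _
    _ ≤ (n0 : ℝ) := by
        rw [hn0_def]
        exact_mod_cast Nat.one_le_pow _ _ (by omega)

lemma delta_aux {d m N : ℕ} (hd4 : 4 ≤ d) (hm1 : 1 ≤ m)
    (hNle : N ≤ m ^ (d * (d + 2))) :
    (N : ℝ) ^ ((1 : ℝ) / (2 * (d : ℝ) ^ 2)) ≤ (m : ℝ) := by
  have hm1R : (1 : ℝ) ≤ (m : ℝ) := by exact_mod_cast hm1
  have hNle2 : (N : ℝ) ≤ (m : ℝ) ^ ((2 * d ^ 2 : ℕ) : ℝ) := by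
    rw [Real.rpow_natCast]
    have h1 : N ≤ m ^ (2 * d ^ 2) := by
      refine le_trans hNle (Nat.pow_le_pow_right (by omega) ?_)
      nlinarith
    calc (N : ℝ) ≤ ((m ^ (2 * d ^ 2) : ℕ) : ℝ) := by exact_mod_cast h1
    _ = (m : ℝ) ^ (2 * d ^ 2) := by push_cast; ring
  calc (N : ℝ) ^ ((1 : ℝ) / (2 * (d : ℝ) ^ 2))
      ≤ ((m : ℝ) ^ ((2 * d ^ 2 : ℕ) : ℝ)) ^ ((1 : ℝ) / (2 * (d : ℝ) ^ 2)) :=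
        Real.rpow_le_rpow (by positivity) hNle2 (by positivity)
    _ = (m : ℝ) ^ (((2 * d ^ 2 : ℕ) : ℝ) * ((1 : ℝ) / (2 * (d : ℝ) ^ 2))) := by
        rw [← Real.rpow_mul (by positivity)]
    _ = (m : ℝ) ^ (1 : ℝ) := by
        congr 1
        have hdne : (2 * (d : ℝ) ^ 2) ≠ 0 := by positivity
        push_cast
        field_simp
    _ = (m : ℝ) := Real.rpow_one _

theorem behrend_type_k_average_free_sets :
    ∀ ε : ℝ, 0 < ε → ∃ δ : ℝ, 0 < δ ∧ ∃ c : ℝ, 0 < c ∧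
      ∀ n : ℕ, ∃ N k : ℕ, n ≤ N ∧ ∃ A : Finset ℕ, A ⊆ Finset.Icc 1 N ∧
        KAvgFree k A ∧ c * (N : ℝ) ^ ((1 : ℝ) - ε) ≤ (A.card : ℝ) ∧
        (N : ℝ) ^ δ ≤ (k : ℝ) := by
  intro ε hε
  obtain ⟨d, hd4, hdR⟩ : ∃ d : ℕ, 4 ≤ d ∧ (5 : ℝ) / ε ≤ (d : ℝ) := by
    refine ⟨⌈(5 : ℝ) / ε⌉₊ + 4, by omega, ?_⟩
    calc (5 : ℝ) / ε ≤ (⌈(5 : ℝ) / ε⌉₊ : ℝ) := Nat.le_ceil _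
    _ ≤ _ := by exact_mod_cast Nat.le_add_right _ _
  have hεd : (5 : ℝ) ≤ ε * d := by
    rw [div_le_iff₀ hε] at hdR
    linarith
  have hdd : 2 * d + 5 ≤ d * d := by nlinarith
  refine ⟨1 / (2 * (d : ℝ) ^ 2), by positivity, 1, one_pos, fun n => ?_⟩
  obtain ⟨m, hm2, hmn, hmd⟩ : ∃ m : ℕ, 2 ≤ m ∧ n ≤ m ∧ d + 1 ≤ m :=
    ⟨max (max n 2) (d + 1), le_trans (le_max_right n 2) (le_max_left _ _),
      le_trans (le_max_left n 2) (le_max_left _ _), le_max_right _ _⟩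
  obtain ⟨p, hp_def⟩ : ∃ p, p = m ^ d := ⟨_, rfl⟩
  obtain ⟨B, hB_def⟩ : ∃ B, B = (m + 1) * p := ⟨_, rfl⟩
  obtain ⟨N, hN_def⟩ : ∃ N, N = B ^ d := ⟨_, rfl⟩
  obtain ⟨n0, hn0_def⟩ : ∃ n0, n0 = m ^ (d * d - 2 * d - 1) := ⟨_, rfl⟩
  have hp2 : 2 ≤ p := by rw [hp_def]; exact le_trans hm2 (Nat.le_self_pow (by omega) m)
  have hpB : p ≤ B := by rw [hB_def]; exact Nat.le_mul_of_pos_left p (by omega)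
  have hB1 : 1 ≤ B := by omega
  have hmB : m * p < B := by rw [hB_def]; nlinarith
  have hN1 : 1 ≤ N := by rw [hN_def]; exact Nat.one_le_pow _ _ (by omega)
  have hNle : N ≤ m ^ (d * (d + 2)) := nat_N_le hm2 hp_def hB_def hN_def
  refine ⟨N, m, ?_, ?_⟩
  · rw [hN_def]
    calc n ≤ m := hmn
    _ ≤ p := by rw [hp_def]; exact Nat.le_self_pow (by omega) m
    _ ≤ B := hpB
    _ ≤ B ^ d := Nat.le_self_pow (by omega) B
  obtain ⟨r, hr_mem, hr_card⟩ := pigeon_aux d p m n0 hd4 hm2 hmd hp_def hn0_def hdd hp2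
  have hr1 : 1 ≤ r := (Finset.mem_Icc.1 hr_mem).1
  have hfilter_sub : {x ∈ (box d p).erase 0 | (∑ j, x j ^ 2) = r} ⊆ Behrend.sphere d p r := by
    intro x hx
    rw [Finset.mem_filter] at hx
    rw [Behrend.sphere, Finset.mem_filter]
    exact ⟨Finset.mem_of_mem_erase hx.1, hx.2⟩
  have hS_card : n0 ≤ (Behrend.sphere d p r).card :=
    le_trans hr_card (Finset.card_le_card hfilter_sub)
  have hsub : (↑(Behrend.sphere d p r) : Set (Fin d → ℕ)) ⊆ {x : Fin d → ℕ | ∀ i, x i < B} :=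
    fun x hx i => lt_of_lt_of_le
      (Behrend.mem_box.1 (Behrend.sphere_subset_box (Finset.mem_coe.1 hx)) i) hpB
  have hinj : Set.InjOn (Behrend.map B) ↑(Behrend.sphere d p r) :=
    (Behrend.map_injOn (n := d) (d := B)).mono hsub
  have hA_card : n0 ≤ ((Behrend.sphere d p r).image (Behrend.map B)).card := by
    rw [Finset.card_image_of_injOn hinj]
    exact hS_card
  refine ⟨(Behrend.sphere d p r).image (Behrend.map B),
    subset_aux hB1 hpB hr1 hN_def, kavg_aux hpB hmB, ?_, ?_⟩
  · rw [one_mul]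
    have h1 : (N : ℝ) ^ ((1 : ℝ) - ε) ≤ (n0 : ℝ) :=
      size_aux hε hd4 hm2 hεd hdd hNle hN1 hn0_def
    have h2 : (n0 : ℝ) ≤ (((Behrend.sphere d p r).image (Behrend.map B)).card : ℝ) := by
      exact_mod_cast hA_card
    linarith
  · exact delta_aux hd4 (le_trans one_le_two hm2) hNle
end

section
/- Let A ⊆ {1,...,N} be a k-average-free set. Construct a layered graph G with vertex set {(x, j) : x ∈ {1,...,(k+1)N}, j ∈ {0,...,k}} and an edge between (x, j) and (y, j+1) whenever y - x ∈ A. Then for every x ∈ {1,...,N} and a ∈ A, the path (x,0), (x+a,1), (x+2a,2), ..., (x+ka,k) is the unique shortest path between (x,0) and (x+k·a, k), and it has length exactly k. -/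
def layeredGraph (N k : ℕ) (A : Finset ℕ) : SimpleGraph (ℕ × ℕ) :=
  SimpleGraph.fromRel (fun u v =>
    u.2 + 1 = v.2 ∧ v.2 ≤ k ∧ 1 ≤ u.1 ∧ v.1 ≤ (k + 1) * N ∧ ∃ a ∈ A, v.1 = u.1 + a)

lemma lg_adj {N k : ℕ} {A : Finset ℕ} {u v : ℕ × ℕ}
    (h : (layeredGraph N k A).Adj u v) :
    (u.2 + 1 = v.2 ∧ ∃ a ∈ A, v.1 = u.1 + a) ∨
    (v.2 + 1 = u.2 ∧ ∃ a ∈ A, u.1 = v.1 + a) := by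
  rw [layeredGraph, SimpleGraph.fromRel_adj] at h
  rcases h.2 with ⟨h1, _, _, _, h5⟩ | ⟨h1, _, _, _, h5⟩
  · exact Or.inl ⟨h1, h5⟩
  · exact Or.inr ⟨h1, h5⟩

lemma layer_le {N k : ℕ} {A : Finset ℕ} {u v : ℕ × ℕ}
    (w : (layeredGraph N k A).Walk u v) : v.2 ≤ u.2 + w.length := by
  induction w with
  | nil => simp
  | cons h p ih =>
    rcases lg_adj h with ⟨h1, _⟩ | ⟨h1, _⟩ <;>
      simp only [SimpleGraph.Walk.length_cons] <;> omega

lemma walk_structure {N k : ℕ} {A : Finset ℕ} {u v : ℕ × ℕ}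
    (w : (layeredGraph N k A).Walk u v) (hw : v.2 = u.2 + w.length) :
    ∃ l : List ℕ, l.length = w.length ∧ (∀ b ∈ l, b ∈ A) ∧ v.1 = u.1 + l.sum ∧
      w.support = (List.range (w.length + 1)).map
        (fun j => (u.1 + (l.take j).sum, u.2 + j)) := by
  induction w with
  | nil => exact ⟨[], by simp, by simp, by simp, by simp [List.range_succ]⟩
  | @cons u u' v h p ih =>
    have hlay := layer_le p
    simp only [SimpleGraph.Walk.length_cons] at hw ⊢
    rcases lg_adj h with ⟨h1, b, hb, hb2⟩ | ⟨h1, _⟩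
    · have hw' : v.2 = u'.2 + p.length := by omega
      obtain ⟨l, hl1, hl2, hl3, hl4⟩ := ih hw'
      refine ⟨b :: l, by simp [hl1], ?_, ?_, ?_⟩
      · intro c hc
        rcases List.mem_cons.mp hc with h' | h'
        · exact h' ▸ hb
        · exact hl2 c h'
      · simp only [List.sum_cons, hl3, hb2]; ring
      · rw [SimpleGraph.Walk.support_cons, hl4]
        conv_rhs => rw [List.range_succ_eq_map]
        rw [List.map_cons, List.map_map]
        congr 1
        simp only [List.map_inj_left, Function.comp_apply, Nat.succ_eq_add_one,
          List.take_succ_cons, List.sum_cons, hb2, ← h1, Prod.mk.injEq]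
        intro j _
        omega
    · omega

lemma exists_canonical_walk {N k : ℕ} {A : Finset ℕ} (hA : A ⊆ Finset.Icc 1 N)
    {x a : ℕ} (hx : x ∈ Finset.Icc 1 N) (ha : a ∈ A) :
    ∀ m j, j + m ≤ k → ∃ w : (layeredGraph N k A).Walk (x + j * a, j) (x + (j + m) * a, j + m),
      w.length = m := by
  intro m
  induction m with
  | zero => intro j _; exact ⟨SimpleGraph.Walk.nil, rfl⟩
  | succ m ih =>
    intro j hj
    have hxN := Finset.mem_Icc.mp hx
    have haN := Finset.mem_Icc.mp (hA ha)
    have hadj : (layeredGraph N k A).Adj (x + j * a, j) (x + (j + 1) * a, j + 1) := by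
      rw [layeredGraph, SimpleGraph.fromRel_adj]
      constructor
      · intro hcontra
        have := congrArg Prod.snd hcontra
        simp at this
      · left
        refine ⟨rfl, by omega, by omega, ?_, a, ha, by ring⟩
        show x + (j + 1) * a ≤ (k + 1) * N
        have h1 : (j + 1) * a ≤ k * N := Nat.mul_le_mul (by omega) haN.2
        have h2 : (k + 1) * N = N + k * N := by ring
        omega
    obtain ⟨w, hw⟩ := ih (j + 1) (by omega)
    have heq : (x + (j + 1 + m) * a, j + 1 + m) = (x + (j + (m + 1)) * a, j + (m + 1)) := by
      have : j + 1 + m = j + (m + 1) := by omega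
      rw [this]
    exact ⟨SimpleGraph.Walk.cons hadj (w.copy rfl heq), by
      simp [SimpleGraph.Walk.length_copy, hw]⟩

theorem unique_shortest_path_in_layered_graph (N k : ℕ) (hk : 1 ≤ k)
    (A : Finset ℕ) (hA : A ⊆ Finset.Icc 1 N) (hfree : KAvgFree k A)
    (x a : ℕ) (hx : x ∈ Finset.Icc 1 N) (ha : a ∈ A) :
    (layeredGraph N k A).dist (x, 0) (x + k * a, k) = k ∧
    ∀ w : (layeredGraph N k A).Walk (x, 0) (x + k * a, k), w.length = k →
      w.support = (List.range (k + 1)).map (fun j => (x + j * a, j)) := by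
  obtain ⟨w0, hw0⟩ := exists_canonical_walk (k := k) hA hx ha k 0 (by omega)
  have e1 : ((x + 0 * a : ℕ), (0 : ℕ)) = ((x : ℕ), (0 : ℕ)) := by simp
  have e2 : ((x + (0 + k) * a : ℕ), 0 + k) = ((x + k * a : ℕ), k) := by simp
  let w1 := w0.copy e1 e2
  have hw1 : w1.length = k := by
    simpa [w1, SimpleGraph.Walk.length_copy] using hw0
  have hreach : (layeredGraph N k A).Reachable (x, 0) (x + k * a, k) := ⟨w1⟩
  have hdle : (layeredGraph N k A).dist (x, 0) (x + k * a, k) ≤ k := by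
    simpa [hw1] using SimpleGraph.dist_le w1
  have hlow : ∀ w : (layeredGraph N k A).Walk (x, 0) (x + k * a, k), k ≤ w.length := by
    intro w
    have := layer_le w
    simpa using this
  refine ⟨le_antisymm hdle ?_, ?_⟩
  · obtain ⟨p, hp⟩ := hreach.exists_walk_length_eq_dist
    rw [← hp]
    exact hlow p
  · intro w hlen
    have hw2 : ((x + k * a, k) : ℕ × ℕ).2 = ((x, 0) : ℕ × ℕ).2 + w.length := by
      simp [hlen]
    obtain ⟨l, hl1, hl2, hl3, hl4⟩ := walk_structure w hw2
    have hlk : l.length = k := by rw [hl1, hlen]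
    have hsum : l.sum = k * a := (Nat.add_left_cancel hl3).symm
    set f : Fin k → ℕ := fun i => l.get (Fin.cast hlk.symm i) with hf
    have hfs : ∑ i, f i = l.sum := by
      rw [← Fin.sum_univ_getElem l]
      exact Equiv.sum_comp (finCongr hlk.symm) l.get
    have hmem : ∀ i, f i ∈ A := fun i => hl2 _ (l.get_mem _)
    have hconst : ∀ i j, f i = f j := by
      by_contra hc
      push_neg at hc
      obtain ⟨i, j, hij⟩ := hc
      exact hfree f hmem ⟨i, j, hij⟩ a ha (by rw [hfs, hsum])
    have hsum2 : l.sum = k * f ⟨0, hk⟩ := by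
      rw [← hfs, Finset.sum_congr rfl (fun i _ => hconst i ⟨0, hk⟩)]
      simp [Finset.card_univ, mul_comm]
    have hfa : f ⟨0, hk⟩ = a :=
      Nat.eq_of_mul_eq_mul_left (show 0 < k by omega)
        (show k * f ⟨0, hk⟩ = k * a by rw [← hsum2, hsum])
    have hall : ∀ c ∈ l, c = a := by
      intro c hc
      obtain ⟨i, hi⟩ := List.mem_iff_get.mp hc
      have h1 : f (Fin.cast hlk i) = l.get i := by
        simp [hf]
      rw [← hi, ← h1, hconst (Fin.cast hlk i) ⟨0, hk⟩, hfa]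
    have hrep : l = List.replicate k a := by
      rw [List.eq_replicate_iff]
      exact ⟨hlk, hall⟩
    rw [hl4, hrep, hlen]
    apply List.map_congr_left
    intro j hj
    have hjk : j ≤ k := by
      have := List.mem_range.mp hj
      omega
    have ht : (List.take j (List.replicate k a)).sum = j * a := by
      rw [List.take_replicate, List.sum_replicate, smul_eq_mul]
      congr 1
      omega
    simp only [ht]
    simp
end

section
/- Let G be a graph and P a set of vertex pairs such that each pair in P has a unique shortest path in G and these shortest paths are pairwise edge-disjoint. Let G' be the bipartite-product graph with vertices (u₁,u₂,i) for u₁,u₂ ∈ V(G), i ∈ {1,2}, and edges {(u₁,u₂,1),(u₁',u₂,2)} when (u₁,u₁') is a forward edge of some pair's shortest path, and {(u₁,u₂,2),(u₁,u₂',1)} when (u₂,u₂') is a forward edge. Then for any two ordered pairs (s₁,t₁),(s₂,t₂) ∈ P both at distance Δ in G, the distance in G' from (s₁,s₂,1) to (t₁,t₂,1) is exactly 2Δ. -/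
/-- The bipartite-product graph `G'` on vertices `(u₁, u₂, i)`: an edge
`{(u₁,u₂,0), (u₁',u₂,1)}` whenever `(u₁,u₁')` is a forward step (a dart) of some pair's
designated shortest path, and an edge `{(u₁,u₂,1), (u₁,u₂',0)}` whenever `(u₂,u₂')` is such
a forward step.  (Index `0` plays the role of "1" and index `1` of "2" in the paper.) -/
def productGraph {V : Type*} (G : SimpleGraph V) (P : Set (V × V))
    (ρ : ∀ p : V × V, G.Walk p.1 p.2) : SimpleGraph (V × V × Fin 2) :=
  SimpleGraph.fromRel (fun a b =>
    (a.2.2 = 0 ∧ b.2.2 = 1 ∧ a.2.1 = b.2.1 ∧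
      ∃ p ∈ P, ∃ dart ∈ (ρ p).darts, dart.toProd = (a.1, b.1)) ∨
    (a.2.2 = 1 ∧ b.2.2 = 0 ∧ a.1 = b.1 ∧
      ∃ p ∈ P, ∃ dart ∈ (ρ p).darts, dart.toProd = (a.2.1, b.2.1)))

namespace ProductGraphAux

variable {V : Type*} {G : SimpleGraph V} {P : Set (V × V)} {ρ : ∀ p : V × V, G.Walk p.1 p.2}

lemma adj_fst {p : V × V} (hp : p ∈ P) {a a' : V} (h : G.Adj a a')
    (hd : (⟨(a, a'), h⟩ : G.Dart) ∈ (ρ p).darts) (y : V) :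
    (productGraph G P ρ).Adj (a, y, 0) (a', y, 1) := by
  refine ⟨?_, Or.inl (Or.inl ⟨rfl, rfl, rfl, p, hp, _, hd, rfl⟩)⟩
  simp [Prod.ext_iff]

lemma adj_snd {q : V × V} (hq : q ∈ P) {b b' : V} (h : G.Adj b b')
    (hd : (⟨(b, b'), h⟩ : G.Dart) ∈ (ρ q).darts) (x : V) :
    (productGraph G P ρ).Adj (x, b, 1) (x, b', 0) := by
  refine ⟨?_, Or.inl (Or.inr ⟨rfl, rfl, rfl, q, hq, _, hd, rfl⟩)⟩
  simp [Prod.ext_iff]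

lemma interleave {p q : V × V} (hp : p ∈ P) (hq : q ∈ P) :
    ∀ (n : ℕ) (a b c d : V) (w₁ : G.Walk a c) (w₂ : G.Walk b d),
      w₁.length = n → w₂.length = n →
      (∀ e ∈ w₁.darts, e ∈ (ρ p).darts) → (∀ e ∈ w₂.darts, e ∈ (ρ q).darts) →
      ∃ W : (productGraph G P ρ).Walk (a, b, 0) (c, d, 0), W.length = 2 * n := by
  intro n
  induction n with
  | zero =>
    intro a b c d w₁ w₂ h₁ h₂ _ _
    obtain rfl := SimpleGraph.Walk.eq_of_length_eq_zero h₁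
    obtain rfl := SimpleGraph.Walk.eq_of_length_eq_zero h₂
    exact ⟨.nil, rfl⟩
  | succ n ih =>
    intro a b c d w₁ w₂ h₁ h₂ hd₁ hd₂
    cases w₁ with
    | nil => simp at h₁
    | cons ha t₁ =>
      cases w₂ with
      | nil => simp at h₂
      | cons hb t₂ =>
        rename_i x y
        have hda : (⟨(a, x), ha⟩ : G.Dart) ∈ (ρ p).darts := hd₁ _ (by simp)
        have hdb : (⟨(b, y), hb⟩ : G.Dart) ∈ (ρ q).darts := hd₂ _ (by simp)
        obtain ⟨W, hW⟩ := ih x y c d t₁ t₂ (by simpa using h₁) (by simpa using h₂)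
          (fun e he => hd₁ e (by simp [he])) (fun e he => hd₂ e (by simp [he]))
        refine ⟨.cons (adj_fst hp ha hda b) (.cons (adj_snd hq hb hdb x) W), ?_⟩
        simp [hW]; ring

lemma adj_cases {a b : V × V × Fin 2} (h : (productGraph G P ρ).Adj a b) :
    (G.Adj a.1 b.1 ∧ a.2.1 = b.2.1) ∨ (a.1 = b.1 ∧ G.Adj a.2.1 b.2.1) := by
  rcases h.2 with (⟨_, _, he, _, _, d, _, hd⟩ | ⟨_, _, he, _, _, d, _, hd⟩) |
      (⟨_, _, he, _, _, d, _, hd⟩ | ⟨_, _, he, _, _, d, _, hd⟩)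
  · exact Or.inl ⟨by have := d.adj; rw [hd] at this; exact this, he⟩
  · exact Or.inr ⟨he, by have := d.adj; rw [hd] at this; exact this⟩
  · exact Or.inl ⟨by have := d.adj; rw [hd] at this; exact this.symm, he.symm⟩
  · exact Or.inr ⟨he.symm, by have := d.adj; rw [hd] at this; exact this.symm⟩

lemma project : ∀ {x y : V × V × Fin 2} (W : (productGraph G P ρ).Walk x y),
    ∃ (u : G.Walk x.1 y.1) (v : G.Walk x.2.1 y.2.1), u.length + v.length ≤ W.length := by
  intro x y W
  induction W with
  | nil => exact ⟨.nil, .nil, by simp⟩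
  | cons h t ih =>
    obtain ⟨u, v, huv⟩ := ih
    rcases adj_cases h with ⟨hadj, he⟩ | ⟨he, hadj⟩
    · exact ⟨.cons hadj u, v.copy he.symm rfl, by
        simp only [SimpleGraph.Walk.length_cons, SimpleGraph.Walk.length_copy]; omega⟩
    · exact ⟨u.copy he.symm rfl, .cons hadj v, by
        simp only [SimpleGraph.Walk.length_cons, SimpleGraph.Walk.length_copy]; omega⟩

end ProductGraphAux

theorem product_graph_dist {V : Type*} (G : SimpleGraph V) (P : Set (V × V)) (Δ : ℕ)
    (hΔ : 1 ≤ Δ) (ρ : ∀ p : V × V, G.Walk p.1 p.2)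
    (hpath : ∀ p ∈ P, (ρ p).IsPath)
    (hlen : ∀ p ∈ P, (ρ p).length = Δ)
    (hdist : ∀ p ∈ P, G.dist p.1 p.2 = Δ)
    (huniq : ∀ p ∈ P, ∀ w : G.Walk p.1 p.2, w.length = Δ → w = ρ p)
    (hdisj : ∀ p ∈ P, ∀ q ∈ P, p ≠ q → ∀ e ∈ (ρ p).edges, e ∉ (ρ q).edges) :
    ∀ p ∈ P, ∀ q ∈ P,
      (productGraph G P ρ).dist (p.1, q.1, 0) (p.2, q.2, 0) = 2 * Δ := by
  intro p hp q hq
  obtain ⟨W, hW⟩ := ProductGraphAux.interleave hp hq Δ p.1 q.1 p.2 q.2 (ρ p) (ρ q)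
    (hlen p hp) (hlen q hq) (fun e he => he) (fun e he => he)
  have hreach : (productGraph G P ρ).Reachable (p.1, q.1, 0) (p.2, q.2, 0) := ⟨W⟩
  refine le_antisymm (hW ▸ SimpleGraph.dist_le W) ?_
  obtain ⟨W', hW'⟩ := hreach.exists_walk_length_eq_dist
  obtain ⟨u, v, huv⟩ := ProductGraphAux.project W'
  have h1 : Δ ≤ u.length := (hdist p hp) ▸ SimpleGraph.dist_le u
  have h2 : Δ ≤ v.length := (hdist q hq) ▸ SimpleGraph.dist_le v
  omega
end

section
/- In the product construction G' of the previous statement, the alternating path ρ—which alternately advances the first coordinate along the unique shortest (s₁,t₁)-path in G and the second coordinate along the unique shortest (s₂,t₂)-path—is the unique shortest path in G' between (s₁,s₂,1) and (t₁,t₂,1). -/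
namespace AltAux

open SimpleGraph

variable {V : Type*} {G : SimpleGraph V} {P : Set (V × V)} {ρ : ∀ p : V × V, G.Walk p.1 p.2}

/-- A walk is determined by its support. -/
theorem walk_eq_of_support_eq {u v : V} (w : G.Walk u v) :
    ∀ w' : G.Walk u v, w.support = w'.support → w = w' := by
  induction w with
  | nil =>
    intro w' h
    cases w' with
    | nil => rfl
    | cons ha t =>
      exfalso
      simp only [Walk.support_nil, Walk.support_cons, List.cons.injEq] at h
      exact t.support_ne_nil h.2.symm
  | cons ha t ih =>
    intro w' h
    cases w' with
    | nil =>
      exfalso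
      simp only [Walk.support_nil, Walk.support_cons, List.cons.injEq] at h
      exact t.support_ne_nil h.2
    | cons ha' t' =>
      rw [Walk.support_cons, Walk.support_cons] at h
      have h2 : t.support = t'.support := by injection h
      have h2' := h2
      rw [t.support_eq_cons, t'.support_eq_cons] at h2'
      injection h2' with hbb _
      subst hbb
      rw [ih t' h2]

theorem adj_cases {x y : V × V × Fin 2} (h : (productGraph G P ρ).Adj x y) :
    (x.2.2 = 0 ∧ y.2.2 = 1 ∧
       ((x.2.1 = y.2.1 ∧ ∃ s ∈ P, ∃ d ∈ (ρ s).darts, d.toProd = (x.1, y.1)) ∨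
        (x.1 = y.1 ∧ ∃ s ∈ P, ∃ d ∈ (ρ s).darts, d.toProd = (y.2.1, x.2.1)))) ∨
    (x.2.2 = 1 ∧ y.2.2 = 0 ∧
       ((x.1 = y.1 ∧ ∃ s ∈ P, ∃ d ∈ (ρ s).darts, d.toProd = (x.2.1, y.2.1)) ∨
        (x.2.1 = y.2.1 ∧ ∃ s ∈ P, ∃ d ∈ (ρ s).darts, d.toProd = (y.1, x.1)))) := by
  rw [productGraph, SimpleGraph.fromRel_adj] at h
  obtain ⟨-, h | h⟩ := h
  · rcases h with ⟨h0, h1, hc, hd⟩ | ⟨h1, h0, hc, hd⟩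
    · exact Or.inl ⟨h0, h1, Or.inl ⟨hc, hd⟩⟩
    · exact Or.inr ⟨h1, h0, Or.inl ⟨hc, hd⟩⟩
  · rcases h with ⟨h0, h1, hc, hd⟩ | ⟨h1, h0, hc, hd⟩
    · exact Or.inr ⟨h1, h0, Or.inr ⟨hc.symm, hd⟩⟩
    · exact Or.inl ⟨h0, h1, Or.inr ⟨hc.symm, hd⟩⟩

theorem adj_move {x y : V × V × Fin 2} (h : (productGraph G P ρ).Adj x y) :
    (G.Adj x.1 y.1 ∧ x.2.1 = y.2.1) ∨ (x.1 = y.1 ∧ G.Adj x.2.1 y.2.1) := by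
  rcases adj_cases h with ⟨_, _, ⟨hc, s, hs, d, hd, hdp⟩ | ⟨hc, s, hs, d, hd, hdp⟩⟩
    | ⟨_, _, ⟨hc, s, hs, d, hd, hdp⟩ | ⟨hc, s, hs, d, hd, hdp⟩⟩
  · exact Or.inl ⟨by have := d.adj; rw [hdp] at this; exact this, hc⟩
  · exact Or.inr ⟨hc, by have := d.adj; rw [hdp] at this; exact this.symm⟩
  · exact Or.inr ⟨hc, by have := d.adj; rw [hdp] at this; exact this⟩
  · exact Or.inl ⟨by have := d.adj; rw [hdp] at this; exact this.symm, hc⟩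

theorem adj1_of_ne {x y : V × V × Fin 2} (h : (productGraph G P ρ).Adj x y)
    (hne : x.1 ≠ y.1) : G.Adj x.1 y.1 :=
  ((adj_move h).resolve_right (fun hh => hne hh.1)).1

theorem adj2_of_ne {x y : V × V × Fin 2} (h : (productGraph G P ρ).Adj x y)
    (hne : x.2.1 ≠ y.2.1) : G.Adj x.2.1 y.2.1 :=
  ((adj_move h).resolve_left (fun hh => hne hh.2)).2

open Classical in
noncomputable def proj1 : ∀ {x y : V × V × Fin 2}, (productGraph G P ρ).Walk x y → G.Walk x.1 y.1
  | _, _, SimpleGraph.Walk.nil => SimpleGraph.Walk.nil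
  | x, _, @SimpleGraph.Walk.cons _ _ _ z _ h w =>
      if hc : x.1 = z.1 then (proj1 w).copy hc.symm rfl
      else SimpleGraph.Walk.cons (adj1_of_ne h hc) (proj1 w)

open Classical in
noncomputable def proj2 : ∀ {x y : V × V × Fin 2}, (productGraph G P ρ).Walk x y → G.Walk x.2.1 y.2.1
  | _, _, SimpleGraph.Walk.nil => SimpleGraph.Walk.nil
  | x, _, @SimpleGraph.Walk.cons _ _ _ z _ h w =>
      if hc : x.2.1 = z.2.1 then (proj2 w).copy hc.symm rfl
      else SimpleGraph.Walk.cons (adj2_of_ne h hc) (proj2 w)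

theorem proj1_nil {x : V × V × Fin 2} :
    proj1 (SimpleGraph.Walk.nil : (productGraph G P ρ).Walk x x) = SimpleGraph.Walk.nil := rfl

theorem proj2_nil {x : V × V × Fin 2} :
    proj2 (SimpleGraph.Walk.nil : (productGraph G P ρ).Walk x x) = SimpleGraph.Walk.nil := rfl

theorem proj1_cons_of_ne {x z y : V × V × Fin 2} (h : (productGraph G P ρ).Adj x z)
    (w : (productGraph G P ρ).Walk z y) (hne : x.1 ≠ z.1) (hadj : G.Adj x.1 z.1) :
    proj1 (SimpleGraph.Walk.cons h w) = SimpleGraph.Walk.cons hadj (proj1 w) := by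
  rw [proj1, dif_neg hne]

theorem proj1_cons_of_eq {x z y : V × V × Fin 2} (h : (productGraph G P ρ).Adj x z)
    (w : (productGraph G P ρ).Walk z y) (heq : x.1 = z.1) :
    proj1 (SimpleGraph.Walk.cons h w) = (proj1 w).copy heq.symm rfl := by
  rw [proj1, dif_pos heq]

theorem proj2_cons_of_ne {x z y : V × V × Fin 2} (h : (productGraph G P ρ).Adj x z)
    (w : (productGraph G P ρ).Walk z y) (hne : x.2.1 ≠ z.2.1) (hadj : G.Adj x.2.1 z.2.1) :
    proj2 (SimpleGraph.Walk.cons h w) = SimpleGraph.Walk.cons hadj (proj2 w) := by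
  rw [proj2, dif_neg hne]

theorem proj2_cons_of_eq {x z y : V × V × Fin 2} (h : (productGraph G P ρ).Adj x z)
    (w : (productGraph G P ρ).Walk z y) (heq : x.2.1 = z.2.1) :
    proj2 (SimpleGraph.Walk.cons h w) = (proj2 w).copy heq.symm rfl := by
  rw [proj2, dif_pos heq]

theorem proj_length {x y : V × V × Fin 2} (w : (productGraph G P ρ).Walk x y) :
    (proj1 w).length + (proj2 w).length = w.length := by
  induction w with
  | nil => simp [proj1_nil, proj2_nil]
  | cons h q ih =>
    rcases adj_move h with ⟨hadj, heq2⟩ | ⟨heq1, hadj⟩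
    · rw [proj1_cons_of_ne h q hadj.ne hadj, proj2_cons_of_eq h q heq2]
      simp only [Walk.length_cons, Walk.length_copy]
      omega
    · rw [proj1_cons_of_eq h q heq1, proj2_cons_of_ne h q hadj.ne hadj]
      simp only [Walk.length_cons, Walk.length_copy]
      omega


-- continuation to append inside namespace AltAux
def interleave : List V → List V → List (V × V × Fin 2)
  | a :: a' :: l1, c :: c' :: l2 => (a, c, 0) :: (a', c, 1) :: interleave (a' :: l1) (c' :: l2)
  | a :: _, c :: _ => [(a, c, 0)]
  | _, _ => []

example (x y : V) : interleave [x] [y] = [(x, y, 0)] := rfl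

theorem ne01 {a c : V} {a' c' : V} : ((a, c, (0:Fin 2)) : V × V × Fin 2) ≠ (a', c', (1:Fin 2)) := by
  intro hcon
  have := congrArg (fun t => t.2.2) hcon
  simp at this

theorem adj_step1 {a a' c : V} (hs : ∃ s ∈ P, ∃ d ∈ (ρ s).darts, d.toProd = (a, a')) :
    (productGraph G P ρ).Adj (a, c, 0) (a', c, 1) := by
  rw [productGraph, SimpleGraph.fromRel_adj]
  exact ⟨ne01, Or.inl (Or.inl ⟨rfl, rfl, rfl, hs⟩)⟩

theorem adj_step2 {a c c' : V} (hs : ∃ s ∈ P, ∃ d ∈ (ρ s).darts, d.toProd = (c, c')) :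
    (productGraph G P ρ).Adj (a, c, 1) (a, c', 0) := by
  rw [productGraph, SimpleGraph.fromRel_adj]
  exact ⟨fun hcon => ne01 hcon.symm, Or.inl (Or.inr ⟨rfl, rfl, rfl, hs⟩)⟩

theorem exists_alt : ∀ (n : ℕ) {a b c d : V} (r1 : G.Walk a b) (r2 : G.Walk c d),
    r1.length = n → r2.length = n →
    (∀ dd ∈ r1.darts, ∃ s ∈ P, dd ∈ (ρ s).darts) →
    (∀ dd ∈ r2.darts, ∃ s ∈ P, dd ∈ (ρ s).darts) →
    ∃ w : (productGraph G P ρ).Walk (a, c, 0) (b, d, 0),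
      w.length = 2 * n ∧ w.support = interleave r1.support r2.support := by
  intro n
  induction n with
  | zero =>
    intro a b c d r1 r2 h1 h2 _ _
    cases r1 with
    | nil =>
      cases r2 with
      | nil => exact ⟨SimpleGraph.Walk.nil, by simp, by simp [interleave]⟩
      | cons hc t => simp at h2
    | cons ha t => simp at h1
  | succ n ih =>
    intro a b c d r1 r2 h1 h2 hD1 hD2
    cases r1 with
    | nil => simp at h1
    | cons ha t1 =>
      rename_i a1
      cases r2 with
      | nil => simp at h2
      | cons hc t2 =>
        rename_i c1
        have hd1 : ∃ s ∈ P, ∃ dd ∈ (ρ s).darts, dd.toProd = (a, a1) := by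
          obtain ⟨s, hs, hmem⟩ := hD1 ⟨(a, a1), ha⟩ (by simp [Walk.darts_cons])
          exact ⟨s, hs, ⟨(a, a1), ha⟩, hmem, rfl⟩
        have hd2 : ∃ s ∈ P, ∃ dd ∈ (ρ s).darts, dd.toProd = (c, c1) := by
          obtain ⟨s, hs, hmem⟩ := hD2 ⟨(c, c1), hc⟩ (by simp [Walk.darts_cons])
          exact ⟨s, hs, ⟨(c, c1), hc⟩, hmem, rfl⟩
        obtain ⟨w', hl, hsup⟩ := ih t1 t2 (by simpa using h1) (by simpa using h2)
          (fun dd hdd => hD1 dd (by simp [Walk.darts_cons]; exact Or.inr hdd))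
          (fun dd hdd => hD2 dd (by simp [Walk.darts_cons]; exact Or.inr hdd))
        refine ⟨SimpleGraph.Walk.cons (adj_step1 hd1) (SimpleGraph.Walk.cons (adj_step2 hd2) w'),
          ?_, ?_⟩
        · simp [Walk.length_cons, hl]; omega
        · rw [Walk.support_cons, Walk.support_cons, Walk.support_cons, Walk.support_cons,
            t1.support_eq_cons, t2.support_eq_cons, interleave]
          rw [← t1.support_eq_cons, ← t2.support_eq_cons, hsup]

theorem not_dart_and_rev {u v : V} {w : G.Walk u v} (hw : w.IsPath) {x y : V}
    (d1 d2 : G.Dart) (hd1 : d1 ∈ w.darts) (hd2 : d2 ∈ w.darts)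
    (h1 : d1.toProd = (x, y)) (h2 : d2.toProd = (y, x)) : False := by
  induction w with
  | nil => simp at hd1
  | cons ha t ih =>
    rw [Walk.cons_isPath_iff] at hw
    rw [Walk.darts_cons, List.mem_cons] at hd1 hd2
    rcases hd1 with hd1 | hd1 <;> rcases hd2 with hd2 | hd2
    · have hdd : d1 = d2 := hd1.trans hd2.symm
      rw [hdd, h2] at h1
      have hx : y = x := (Prod.ext_iff.mp h1).1
      have hadj := d1.adj
      rw [hdd, h2] at hadj
      exact G.loopless.irrefl _ (hx ▸ hadj)
    · rw [hd1] at h1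
      simp at h1
      have := Walk.dart_snd_mem_support_of_mem_darts t hd2
      rw [h2] at this
      simp at this
      rw [← h1.1] at this
      exact hw.2 this
    · rw [hd2] at h2
      simp at h2
      have := Walk.dart_snd_mem_support_of_mem_darts t hd1
      rw [h1] at this
      simp at this
      rw [← h2.1] at this
      exact hw.2 this
    · exact ih hw.1 hd1 hd2


theorem dart_edge_mem {u v : V} {w : G.Walk u v} {d : G.Dart} (hd : d ∈ w.darts) :
    d.edge ∈ w.edges :=
  List.mem_map_of_mem (f := SimpleGraph.Dart.edge) hd

theorem no_forward_backward
    (hpaths : ∀ s ∈ P, (ρ s).IsPath)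
    (hdisj : ∀ s ∈ P, ∀ q ∈ P, s ≠ q → ∀ e ∈ (ρ s).edges, e ∉ (ρ q).edges)
    {s q : V × V} (hs : s ∈ P) (hq : q ∈ P) {x y : V}
    (h1 : ∃ d ∈ (ρ q).darts, d.toProd = (x, y))
    (h2 : ∃ d ∈ (ρ s).darts, d.toProd = (y, x)) : False := by
  obtain ⟨d1, hd1, he1⟩ := h1
  obtain ⟨d2, hd2, he2⟩ := h2
  have hedge1 : d1.edge = s(x, y) := by rw [SimpleGraph.Dart.edge, he1]
  have hedge2 : d2.edge = s(x, y) := by rw [SimpleGraph.Dart.edge, he2]; exact Sym2.eq_swap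
  have hsq : s = q := by
    by_contra hne
    exact hdisj s hs q hq hne d2.edge (dart_edge_mem hd2)
      (by rw [hedge2, ← hedge1]; exact dart_edge_mem hd1)
  subst hsq
  exact not_dart_and_rev (hpaths s hs) d1 d2 hd1 hd2 he1 he2

theorem uniq_alt
    (hpaths : ∀ s ∈ P, (ρ s).IsPath)
    (hdisj : ∀ s ∈ P, ∀ q ∈ P, s ≠ q → ∀ e ∈ (ρ s).edges, e ∉ (ρ q).edges)
    {p q : V × V} (hp : p ∈ P) (hq : q ∈ P) :
    ∀ (n : ℕ) {a c : V} (r1 : G.Walk a p.2) (r2 : G.Walk c q.2),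
      r1.length = n → r2.length = n →
      (∀ dd ∈ r1.darts, dd ∈ (ρ p).darts) →
      (∀ dd ∈ r2.darts, dd ∈ (ρ q).darts) →
      ∀ w' : (productGraph G P ρ).Walk (a, c, 0) (p.2, q.2, 0),
        proj1 w' = r1 → proj2 w' = r2 →
        w'.support = interleave r1.support r2.support := by
  intro n
  induction n with
  | zero =>
    intro a c r1 r2 h1 h2 _ _ w' hp1 hp2
    have hl : w'.length = 0 := by
      have hpl := proj_length w'
      rw [hp1, hp2, h1, h2] at hpl
      omega
    cases r1 with
    | cons _ _ => simp at h1
    | nil =>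
      cases r2 with
      | cons _ _ => simp at h2
      | nil =>
        cases w' with
        | nil => simp [interleave]
        | cons _ _ => simp at hl
  | succ n ih =>
    intro a c r1 r2 h1 h2 hD1 hD2 w' hp1 hp2
    cases r1 with
    | nil => simp at h1
    | cons ha1 t1 =>
      rename_i a1
      cases r2 with
      | nil => simp at h2
      | cons hc1 t2 =>
        rename_i c1
        have hlw : w'.length = 2 * n + 2 := by
          have hpl := proj_length w'
          rw [hp1, hp2, h1, h2] at hpl
          omega
        cases w' with
        | nil => simp at hlw
        | cons h1' rest1 =>
          rename_i z1
          cases rest1 with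
          | nil => simp at hlw
          | cons h2' rest =>
            rename_i z2
            obtain ⟨z1a, z1c, z1i⟩ := z1
            -- analyze the first step
            rcases adj_cases h1' with ⟨_, hzi, hmv⟩ | ⟨h0, _, _⟩
            swap
            · exact absurd (show (0:Fin 2) = 1 from h0) (by decide)
            have hz1 : z1i = 1 := hzi
            subst hz1
            rcases hmv with ⟨hcz, hforw⟩ | ⟨haz, hbw⟩
            · -- forward move in first coordinate
              have hcz' : c = z1c := hcz
              subst hcz'
              have hne1 : (a, c, (0:Fin 2)).1 ≠ ((z1a, c, (1:Fin 2)) : V × V × Fin 2).1 := by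
                obtain ⟨s, hsP, d, hd, hdp⟩ := hforw
                have := d.adj; rw [hdp] at this; exact this.ne
              have hadj1 : G.Adj a z1a := adj1_of_ne h1' hne1
              rw [proj1_cons_of_ne h1' _ hne1 hadj1] at hp1
              injection hp1 with hu hmid hw htl
              have hmid' : z1a = a1 := hmid
              subst z1a
              have hpr1 : proj1 (SimpleGraph.Walk.cons h2' rest) = t1 := eq_of_heq htl
              have hpr2 : proj2 (SimpleGraph.Walk.cons h2' rest) =
                  SimpleGraph.Walk.cons hc1 t2 := by
                rw [proj2_cons_of_eq h1' _ rfl] at hp2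
                rw [← hp2, Walk.copy_rfl_rfl]
              -- analyze the second step
              obtain ⟨z2a, z2c, z2i⟩ := z2
              rcases adj_cases h2' with ⟨h0, _, _⟩ | ⟨_, hzi2, hmv2⟩
              · exact absurd (show (1:Fin 2) = 0 from h0) (by decide)
              have hz2 : z2i = 0 := hzi2
              subst hz2
              rcases hmv2 with ⟨haz2, hforw2⟩ | ⟨hcz2, hbw2⟩
              · -- forward move in second coordinate
                have haz2' : z2a = a1 := haz2.symm
                subst z2a
                have hne2 : ((a1, c, (1:Fin 2)) : V × V × Fin 2).2.1 ≠
                    ((a1, z2c, (0:Fin 2)) : V × V × Fin 2).2.1 := by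
                  obtain ⟨s, hsP, d, hd, hdp⟩ := hforw2
                  have := d.adj; rw [hdp] at this; exact this.ne
                have hadj2 : G.Adj c z2c := adj2_of_ne h2' hne2
                rw [proj2_cons_of_ne h2' _ hne2 hadj2] at hpr2
                injection hpr2 with hu2 hmid2 hw2 htl2
                have hmid2' : z2c = c1 := hmid2
                subst z2c
                have hr2 : proj2 rest = t2 := eq_of_heq htl2
                have hr1 : proj1 rest = t1 := by
                  rw [proj1_cons_of_eq h2' _ rfl] at hpr1
                  rw [← hpr1, Walk.copy_rfl_rfl]
                have hsub := ih t1 t2 (by simpa using h1) (by simpa using h2)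
                  (fun dd hdd => hD1 dd (by simp [Walk.darts_cons]; exact Or.inr hdd))
                  (fun dd hdd => hD2 dd (by simp [Walk.darts_cons]; exact Or.inr hdd))
                  rest hr1 hr2
                rw [Walk.support_cons, Walk.support_cons, Walk.support_cons, Walk.support_cons,
                  t1.support_eq_cons, t2.support_eq_cons, interleave]
                rw [← t1.support_eq_cons, ← t2.support_eq_cons, hsub]
              · -- backward move in first coordinate : contradiction
                exfalso
                have hcz2' : z2c = c := hcz2.symm
                subst z2c
                have hne2 : ((a1, c, (1:Fin 2)) : V × V × Fin 2).1 ≠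
                    ((z2a, c, (0:Fin 2)) : V × V × Fin 2).1 := by
                  obtain ⟨s, hsP, d, hd, hdp⟩ := hbw2
                  have := d.adj; rw [hdp] at this; exact this.ne'
                have hadj2 : G.Adj a1 z2a := adj1_of_ne h2' hne2
                rw [proj1_cons_of_ne h2' _ hne2 hadj2] at hpr1
                cases t1 with
                | nil => simp at h1; exact absurd (congrArg Walk.length hpr1) (by simp)
                | cons ha2 t1' =>
                  rename_i a2
                  injection hpr1 with hu2 hmid2 hw2 htl2
                  have hmid2' : z2a = a2 := hmid2
                  subst z2a
                  obtain ⟨s, hsP, hrev⟩ := hbw2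
                  exact no_forward_backward hpaths hdisj hsP hp
                    ⟨⟨(a1, a2), ha2⟩, hD1 _ (by simp [Walk.darts_cons]), rfl⟩ hrev
            · -- backward move in second coordinate : contradiction
              exfalso
              have haz' : a = z1a := haz
              subst haz'
              have hne1 : ((a, c, (0:Fin 2)) : V × V × Fin 2).2.1 ≠
                  ((a, z1c, (1:Fin 2)) : V × V × Fin 2).2.1 := by
                obtain ⟨s, hsP, d, hd, hdp⟩ := hbw
                have := d.adj; rw [hdp] at this; exact this.ne'
              have hadj1 : G.Adj c z1c := adj2_of_ne h1' hne1
              rw [proj2_cons_of_ne h1' _ hne1 hadj1] at hp2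
              injection hp2 with hu hmid hw htl
              have hmid' : z1c = c1 := hmid
              subst z1c
              obtain ⟨s, hsP, hrev⟩ := hbw
              exact no_forward_backward hpaths hdisj hsP hq
                ⟨⟨(c, c1), hc1⟩, hD2 _ (by simp [Walk.darts_cons]), rfl⟩ hrev


theorem interleave_eq_rangeMap : ∀ (n : ℕ) (l1 l2 : List V) (d1 d2 : V),
    l1.length = n + 1 → l2.length = n + 1 →
    interleave l1 l2 = (List.range (2 * n + 1)).map (fun j =>
      if j % 2 = 0 then (l1.getD (j / 2) d1, l2.getD (j / 2) d2, (0 : Fin 2))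
      else (l1.getD (j / 2 + 1) d1, l2.getD (j / 2) d2, (1 : Fin 2))) := by
  intro n
  induction n with
  | zero =>
    intro l1 l2 d1 d2 h1 h2
    obtain ⟨a, rfl⟩ := List.length_eq_one_iff.mp h1
    obtain ⟨c, rfl⟩ := List.length_eq_one_iff.mp h2
    simp [interleave, List.range_succ]
  | succ n ih =>
    intro l1 l2 d1 d2 h1 h2
    match l1, h1 with
    | a :: l1', h1 =>
    match l1', h1 with
    | a' :: l1'', h1 =>
    match l2, h2 with
    | c :: l2', h2 =>
    match l2', h2 with
    | c' :: l2'', h2 =>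
    have key := ih (a' :: l1'') (c' :: l2'') d1 d2 (by simpa using h1) (by simpa using h2)
    rw [interleave, key]
    have hrange : List.range (2 * (n + 1) + 1) =
        0 :: 1 :: (List.range (2 * n + 1)).map (fun j => j + 2) := by
      have e1 : 2 * (n + 1) + 1 = (2 * n + 1) + 1 + 1 := by ring
      rw [e1, List.range_succ_eq_map, List.range_succ_eq_map]
      simp only [List.map_cons, List.map_map]
      refine congrArg₂ _ rfl (congrArg₂ _ rfl ?_)
      apply List.map_congr_left
      intro j _
      show Nat.succ (Nat.succ j) = j + 2
      omega
    rw [hrange, List.map_cons, List.map_cons, List.map_map]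
    refine congrArg₂ _ rfl (congrArg₂ _ rfl ?_)
    apply List.map_congr_left
    intro j _
    have he1 : (j + 2) % 2 = j % 2 := by omega
    have he2 : (j + 2) / 2 = j / 2 + 1 := by omega
    simp only [Function.comp_apply, he1, he2, List.getD_cons_succ]

end AltAux

theorem alternating_path_is_unique_shortest {V : Type*} (G : SimpleGraph V)
    (P : Set (V × V)) (Δ : ℕ) (hΔ : 1 ≤ Δ) (ρ : ∀ p : V × V, G.Walk p.1 p.2)
    (hpath : ∀ p ∈ P, (ρ p).IsPath)
    (hlen : ∀ p ∈ P, (ρ p).length = Δ)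
    (hdist : ∀ p ∈ P, G.dist p.1 p.2 = Δ)
    (huniq : ∀ p ∈ P, ∀ w : G.Walk p.1 p.2, w.length = Δ → w = ρ p)
    (hdisj : ∀ p ∈ P, ∀ q ∈ P, p ≠ q → ∀ e ∈ (ρ p).edges, e ∉ (ρ q).edges) :
    ∀ p ∈ P, ∀ q ∈ P,
      ∃ w : (productGraph G P ρ).Walk (p.1, q.1, 0) (p.2, q.2, 0),
        w.length = 2 * Δ ∧
        w.support = (List.range (2 * Δ + 1)).map (fun j =>
          if j % 2 = 0 then
            ((ρ p).support.getD (j / 2) p.1, (ρ q).support.getD (j / 2) q.1, (0 : Fin 2))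
          else
            ((ρ p).support.getD (j / 2 + 1) p.1, (ρ q).support.getD (j / 2) q.1, (1 : Fin 2))) ∧
        ∀ w' : (productGraph G P ρ).Walk (p.1, q.1, 0) (p.2, q.2, 0),
          w'.length = 2 * Δ → w' = w := by
  intro p hp q hq
  have hlenp := hlen p hp
  have hlenq := hlen q hq
  obtain ⟨w, hwl, hwsup⟩ := AltAux.exists_alt Δ (ρ p) (ρ q) hlenp hlenq
    (fun dd hdd => ⟨p, hp, hdd⟩) (fun dd hdd => ⟨q, hq, hdd⟩)
  have hform : AltAux.interleave (ρ p).support (ρ q).support =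
      (List.range (2 * Δ + 1)).map (fun j =>
        if j % 2 = 0 then
          ((ρ p).support.getD (j / 2) p.1, (ρ q).support.getD (j / 2) q.1, (0 : Fin 2))
        else
          ((ρ p).support.getD (j / 2 + 1) p.1, (ρ q).support.getD (j / 2) q.1, (1 : Fin 2))) :=
    AltAux.interleave_eq_rangeMap Δ _ _ p.1 q.1
      (by rw [SimpleGraph.Walk.length_support, hlenp])
      (by rw [SimpleGraph.Walk.length_support, hlenq])
  refine ⟨w, hwl, by rw [hwsup, hform], ?_⟩
  intro w' hw'
  have hpl := AltAux.proj_length w'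
  rw [hw'] at hpl
  have hd1 : G.dist p.1 p.2 ≤ (AltAux.proj1 w').length := SimpleGraph.dist_le _
  have hd2 : G.dist q.1 q.2 ≤ (AltAux.proj2 w').length := SimpleGraph.dist_le _
  rw [hdist p hp] at hd1
  rw [hdist q hq] at hd2
  have hl1 : (AltAux.proj1 w').length = Δ := by omega
  have hl2 : (AltAux.proj2 w').length = Δ := by omega
  have e1 : AltAux.proj1 w' = ρ p := huniq p hp _ hl1
  have e2 : AltAux.proj2 w' = ρ q := huniq q hq _ hl2
  have hsup' := AltAux.uniq_alt hpath hdisj hp hq Δ (ρ p) (ρ q) hlenp hlenq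
    (fun _ h => h) (fun _ h => h) w' e1 e2
  exact AltAux.walk_eq_of_support_eq w' w (hsup'.trans hwsup.symm)
end

section
/- In the product construction G', for two distinct pairs p' ≠ p'' in P' (where P' consists of pairs {(s₁,s₂,1),(t₁,t₂,1)} for (s₁,t₁),(s₂,t₂) ∈ P), the unique shortest paths ρ(p') and ρ(p'') are 2-path disjoint: they share no subpath consisting of two consecutive edges. -/
/-- If `[a, b]` is an infix of the support of a walk, then `(a, b)` is one of its darts. -/
lemma dart_of_infix {V : Type*} {G : SimpleGraph V} :
    ∀ {x y : V} (w : G.Walk x y) {a b : V},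
    [a, b] <:+: w.support → ∃ d ∈ w.darts, d.toProd = (a, b) := by
  intro x y w
  induction w with
  | nil =>
    intro a b h
    have := h.length_le
    simp [SimpleGraph.Walk.support_nil] at this
  | @cons u v z h w ih =>
    intro a b hinf
    obtain ⟨s, t, hst⟩ := hinf
    rw [SimpleGraph.Walk.support_cons] at hst
    cases s with
    | nil =>
      rw [SimpleGraph.Walk.support_eq_cons w] at hst
      simp only [List.nil_append, List.cons_append, List.cons.injEq] at hst
      obtain ⟨rfl, rfl, -⟩ := hst
      exact ⟨⟨(a, b), h⟩, by simp [SimpleGraph.Walk.darts_cons], rfl⟩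
    | cons hd tl =>
      simp only [List.cons_append, List.cons.injEq, List.append_assoc] at hst
      obtain ⟨-, hst⟩ := hst
      obtain ⟨d, hdm, hp⟩ := ih ⟨tl, t, by simpa [List.append_assoc] using hst⟩
      exact ⟨d, by simp [SimpleGraph.Walk.darts_cons, hdm], hp⟩

/-- Structure of an adjacency in the product graph. -/
lemma productGraph_adj_cases {V : Type*} {G : SimpleGraph V} {P : Set (V × V)}
    {ρ : ∀ p : V × V, G.Walk p.1 p.2} {a b : V × V × Fin 2}
    (h : (productGraph G P ρ).Adj a b) :
    (a.2.2 = 0 ∧ b.2.2 = 1 ∧ a.2.1 = b.2.1 ∧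
      ∃ r ∈ P, ∃ d ∈ (ρ r).darts, d.toProd = (a.1, b.1)) ∨
    (a.2.2 = 1 ∧ b.2.2 = 0 ∧ a.1 = b.1 ∧
      ∃ r ∈ P, ∃ d ∈ (ρ r).darts, d.toProd = (a.2.1, b.2.1)) ∨
    (a.2.2 = 1 ∧ b.2.2 = 0 ∧ a.2.1 = b.2.1 ∧
      ∃ r ∈ P, ∃ d ∈ (ρ r).darts, d.toProd = (b.1, a.1)) ∨
    (a.2.2 = 0 ∧ b.2.2 = 1 ∧ a.1 = b.1 ∧
      ∃ r ∈ P, ∃ d ∈ (ρ r).darts, d.toProd = (b.2.1, a.2.1)) := by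
  rw [productGraph, SimpleGraph.fromRel_adj] at h
  obtain ⟨-, h | h⟩ := h
  · rcases h with ⟨h1, h2, h3, hr⟩ | ⟨h1, h2, h3, hr⟩
    · exact Or.inl ⟨h1, h2, h3, hr⟩
    · exact Or.inr (Or.inl ⟨h1, h2, h3, hr⟩)
  · rcases h with ⟨h1, h2, h3, hr⟩ | ⟨h1, h2, h3, hr⟩
    · exact Or.inr (Or.inr (Or.inl ⟨h2, h1, h3.symm, hr⟩))
    · exact Or.inr (Or.inr (Or.inr ⟨h2, h1, h3.symm, hr⟩))

/-- Every walk in the product graph projects to a pair of walks in `G`, whose lengths add up,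
and such that every dart of the walk projects to a dart of one of the two projections. -/
lemma productGraph_proj {V : Type*} {G : SimpleGraph V} {P : Set (V × V)}
    {ρ : ∀ p : V × V, G.Walk p.1 p.2} :
    ∀ {x y : V × V × Fin 2} (w : (productGraph G P ρ).Walk x y),
    ∃ (w1 : G.Walk x.1 y.1) (w2 : G.Walk x.2.1 y.2.1),
      w1.length + w2.length = w.length ∧
      ∀ d ∈ w.darts,
        (d.toProd.1.2.1 = d.toProd.2.2.1 ∧
          ∃ d1 ∈ w1.darts, d1.toProd = (d.toProd.1.1, d.toProd.2.1)) ∨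
        (d.toProd.1.1 = d.toProd.2.1 ∧
          ∃ d2 ∈ w2.darts, d2.toProd = (d.toProd.1.2.1, d.toProd.2.2.1)) := by
  intro x y w
  induction w with
  | nil => exact ⟨SimpleGraph.Walk.nil, SimpleGraph.Walk.nil, by simp, by simp⟩
  | @cons u v z h w ih =>
    obtain ⟨w1, w2, hsum, hproj⟩ := ih
    have hcase : (u.2.1 = v.2.1 ∧ G.Adj u.1 v.1) ∨ (u.1 = v.1 ∧ G.Adj u.2.1 v.2.1) := by
      rcases productGraph_adj_cases h with ⟨-, -, hc, r, -, d, -, hp⟩ | ⟨-, -, hc, r, -, d, -, hp⟩ |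
        ⟨-, -, hc, r, -, d, -, hp⟩ | ⟨-, -, hc, r, -, d, -, hp⟩
      · exact Or.inl ⟨hc, by have h' := d.adj; rw [hp] at h'; exact h'⟩
      · exact Or.inr ⟨hc, by have h' := d.adj; rw [hp] at h'; exact h'⟩
      · exact Or.inl ⟨hc, by have h' := d.adj; rw [hp] at h'; exact h'.symm⟩
      · exact Or.inr ⟨hc, by have h' := d.adj; rw [hp] at h'; exact h'.symm⟩
    rcases hcase with ⟨hc, hadj⟩ | ⟨hc, hadj⟩
    · refine ⟨SimpleGraph.Walk.cons hadj w1, w2.copy hc.symm rfl, ?_, ?_⟩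
      · simp only [SimpleGraph.Walk.length_cons, SimpleGraph.Walk.length_copy]
        omega
      · intro d hd
        rw [SimpleGraph.Walk.darts_cons, List.mem_cons] at hd
        rcases hd with rfl | hd
        · exact Or.inl ⟨hc, ⟨(u.1, v.1), hadj⟩, by simp [SimpleGraph.Walk.darts_cons], rfl⟩
        · rcases hproj d hd with ⟨h1, d1, hd1, hp1⟩ | ⟨h1, d2, hd2, hp2⟩
          · exact Or.inl ⟨h1, d1, by simp [SimpleGraph.Walk.darts_cons, hd1], hp1⟩
          · exact Or.inr ⟨h1, d2, by simp [SimpleGraph.Walk.darts_copy, hd2], hp2⟩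
    · refine ⟨w1.copy hc.symm rfl, SimpleGraph.Walk.cons hadj w2, ?_, ?_⟩
      · simp only [SimpleGraph.Walk.length_cons, SimpleGraph.Walk.length_copy]
        omega
      · intro d hd
        rw [SimpleGraph.Walk.darts_cons, List.mem_cons] at hd
        rcases hd with rfl | hd
        · exact Or.inr ⟨hc, ⟨(u.2.1, v.2.1), hadj⟩, by simp [SimpleGraph.Walk.darts_cons], rfl⟩
        · rcases hproj d hd with ⟨h1, d1, hd1, hp1⟩ | ⟨h1, d2, hd2, hp2⟩
          · exact Or.inl ⟨h1, d1, by simp [SimpleGraph.Walk.darts_copy, hd1], hp1⟩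
          · exact Or.inr ⟨h1, d2, by simp [SimpleGraph.Walk.darts_cons, hd2], hp2⟩

theorem shortest_paths_two_path_disjoint {V : Type*} (G : SimpleGraph V)
    (P : Set (V × V)) (Δ : ℕ) (hΔ : 1 ≤ Δ) (ρ : ∀ p : V × V, G.Walk p.1 p.2)
    (hpath : ∀ p ∈ P, (ρ p).IsPath)
    (hlen : ∀ p ∈ P, (ρ p).length = Δ)
    (hdist : ∀ p ∈ P, G.dist p.1 p.2 = Δ)
    (huniq : ∀ p ∈ P, ∀ w : G.Walk p.1 p.2, w.length = Δ → w = ρ p)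
    (hdisj : ∀ p ∈ P, ∀ q ∈ P, p ≠ q → ∀ e ∈ (ρ p).edges, e ∉ (ρ q).edges) :
    ∀ p ∈ P, ∀ q ∈ P, ∀ p' ∈ P, ∀ q' ∈ P, (p, q) ≠ (p', q') →
      ∀ (w : (productGraph G P ρ).Walk (p.1, q.1, 0) (p.2, q.2, 0))
        (w' : (productGraph G P ρ).Walk (p'.1, q'.1, 0) (p'.2, q'.2, 0)),
        w.length = 2 * Δ → w'.length = 2 * Δ →
        ¬ ∃ a b c : V × V × Fin 2,
            [a, b, c] <:+: w.support ∧
            ([a, b, c] <:+: w'.support ∨ [c, b, a] <:+: w'.support) := by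
  intro p hp q hq p' hp' q' hq' hne w w' hw hw'
  rintro ⟨a, b, c, hinf, hcase⟩
  have fin01 : (0 : Fin 2) ≠ 1 := by decide
  -- The key claim: every dart of a length-`2Δ` walk between the designated endpoints
  -- projects to an edge of `ρ pp` (if it moves the first coordinate, going index 0 → 1)
  -- or to an edge of `ρ qq` (if it moves the second coordinate, going index 1 → 0).
  have key : ∀ (pp : V × V), pp ∈ P → ∀ (qq : V × V), qq ∈ P →
      ∀ (u : (productGraph G P ρ).Walk (pp.1, qq.1, 0) (pp.2, qq.2, 0)),
      u.length = 2 * Δ → ∀ d ∈ u.darts,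
      (d.toProd.1.2.2 = 0 ∧ d.toProd.2.2.2 = 1 ∧ d.toProd.1.2.1 = d.toProd.2.2.1 ∧
        s(d.toProd.1.1, d.toProd.2.1) ∈ (ρ pp).edges) ∨
      (d.toProd.1.2.2 = 1 ∧ d.toProd.2.2.2 = 0 ∧ d.toProd.1.1 = d.toProd.2.1 ∧
        s(d.toProd.1.2.1, d.toProd.2.2.1) ∈ (ρ qq).edges) := by
    intro pp hpp qq hqq u hulen d hd
    obtain ⟨w1, w2, hsum, hproj⟩ := productGraph_proj u
    have hw1 : Δ ≤ w1.length := by rw [← hdist pp hpp]; exact G.dist_le w1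
    have hw2 : Δ ≤ w2.length := by rw [← hdist qq hqq]; exact G.dist_le w2
    have h1 : w1.length = Δ := by omega
    have h2 : w2.length = Δ := by omega
    have e1 : w1 = ρ pp := huniq pp hpp w1 h1
    have e2 : w2 = ρ qq := huniq qq hqq w2 h2
    rcases hproj d hd with ⟨hc, d1, hd1, hp1⟩ | ⟨hc, d2, hd2, hp2⟩
    · -- the dart moves the first coordinate
      have hadj1 : G.Adj d.toProd.1.1 d.toProd.2.1 := by
        have h' := d1.adj; rw [hp1] at h'; exact h'
      have hedge : s(d.toProd.1.1, d.toProd.2.1) ∈ (ρ pp).edges := by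
        rw [← e1]
        have h3 : d1.edge ∈ w1.edges := List.mem_map_of_mem (f := SimpleGraph.Dart.edge) hd1
        have h4 : d1.edge = s(d.toProd.1.1, d.toProd.2.1) := by
          show s(d1.toProd.1, d1.toProd.2) = _
          rw [hp1]
        rwa [h4] at h3
      rcases productGraph_adj_cases d.adj with ⟨hi0, hi1, -, -⟩ | ⟨-, -, heq, -⟩ |
        ⟨-, -, -, r, hrP, dr, hdr, hpr⟩ | ⟨-, -, heq, -⟩
      · exact Or.inl ⟨hi0, hi1, hc, hedge⟩
      · exact absurd heq hadj1.ne
      · -- backward traversal of a designated dart: impossible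
        exfalso
        have hre : s(d.toProd.1.1, d.toProd.2.1) ∈ (ρ r).edges := by
          have h3 : dr.edge ∈ (ρ r).edges := List.mem_map_of_mem (f := SimpleGraph.Dart.edge) hdr
          have h4 : dr.edge = s(d.toProd.2.1, d.toProd.1.1) := by
            show s(dr.toProd.1, dr.toProd.2) = _
            rw [hpr]
          rw [h4, Sym2.eq_swap] at h3
          exact h3
        have hrpp : r = pp := by
          by_contra hne'
          exact hdisj r hrP pp hpp hne' _ hre hedge
        rw [hrpp] at hdr
        have hd1' : d1 ∈ (ρ pp).darts := e1 ▸ hd1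
        have hde : d1 = dr := by
          apply List.inj_on_of_nodup_map ((hpath pp hpp).edges_nodup) hd1' hdr
          show s(d1.toProd.1, d1.toProd.2) = s(dr.toProd.1, dr.toProd.2)
          rw [hp1, hpr]
          exact Sym2.eq_swap
        have h5 : (d.toProd.1.1, d.toProd.2.1) = (d.toProd.2.1, d.toProd.1.1) := by
          rw [← hp1, hde, hpr]
        rw [Prod.mk.injEq] at h5
        exact hadj1.ne h5.1
      · exact absurd heq hadj1.ne
    · -- the dart moves the second coordinate
      have hadj2 : G.Adj d.toProd.1.2.1 d.toProd.2.2.1 := by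
        have h' := d2.adj; rw [hp2] at h'; exact h'
      have hedge : s(d.toProd.1.2.1, d.toProd.2.2.1) ∈ (ρ qq).edges := by
        rw [← e2]
        have h3 : d2.edge ∈ w2.edges := List.mem_map_of_mem (f := SimpleGraph.Dart.edge) hd2
        have h4 : d2.edge = s(d.toProd.1.2.1, d.toProd.2.2.1) := by
          show s(d2.toProd.1, d2.toProd.2) = _
          rw [hp2]
        rwa [h4] at h3
      rcases productGraph_adj_cases d.adj with ⟨-, -, heq, -⟩ | ⟨hi1, hi0, -, -⟩ |
        ⟨-, -, heq, -⟩ | ⟨-, -, -, r, hrP, dr, hdr, hpr⟩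
      · exact absurd heq hadj2.ne
      · exact Or.inr ⟨hi1, hi0, hc, hedge⟩
      · exact absurd heq hadj2.ne
      · exfalso
        have hre : s(d.toProd.1.2.1, d.toProd.2.2.1) ∈ (ρ r).edges := by
          have h3 : dr.edge ∈ (ρ r).edges := List.mem_map_of_mem (f := SimpleGraph.Dart.edge) hdr
          have h4 : dr.edge = s(d.toProd.2.2.1, d.toProd.1.2.1) := by
            show s(dr.toProd.1, dr.toProd.2) = _
            rw [hpr]
          rw [h4, Sym2.eq_swap] at h3
          exact h3
        have hrqq : r = qq := by
          by_contra hne'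
          exact hdisj r hrP qq hqq hne' _ hre hedge
        rw [hrqq] at hdr
        have hd2' : d2 ∈ (ρ qq).darts := e2 ▸ hd2
        have hde : d2 = dr := by
          apply List.inj_on_of_nodup_map ((hpath qq hqq).edges_nodup) hd2' hdr
          show s(d2.toProd.1, d2.toProd.2) = s(dr.toProd.1, dr.toProd.2)
          rw [hp2, hpr]
          exact Sym2.eq_swap
        have h5 : (d.toProd.1.2.1, d.toProd.2.2.1) = (d.toProd.2.2.1, d.toProd.1.2.1) := by
          rw [← hp2, hde, hpr]
        rw [Prod.mk.injEq] at h5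
        exact hadj2.ne h5.1
  -- helpers to conclude equality of pairs from a shared edge
  have same1 : ∀ e, e ∈ (ρ p).edges → e ∈ (ρ p').edges → p = p' := by
    intro e h1 h2
    by_contra hne'
    exact hdisj p hp p' hp' hne' e h1 h2
  have same2 : ∀ e, e ∈ (ρ q).edges → e ∈ (ρ q').edges → q = q' := by
    intro e h1 h2
    by_contra hne'
    exact hdisj q hq q' hq' hne' e h1 h2
  -- darts of `w` coming from the shared 2-path
  have hab : [a, b] <:+: w.support :=
    List.IsInfix.trans ⟨[], [c], by simp⟩ hinf
  have hbc : [b, c] <:+: w.support :=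
    List.IsInfix.trans ⟨[a], [], by simp⟩ hinf
  obtain ⟨da, hda, hpa⟩ := dart_of_infix w hab
  obtain ⟨db, hdb, hpb⟩ := dart_of_infix w hbc
  have k1 := key p hp q hq w hw da hda
  have k2 := key p hp q hq w hw db hdb
  simp only [hpa] at k1
  simp only [hpb] at k2
  rcases hcase with hinf' | hinf'
  · -- aligned case
    have hab' : [a, b] <:+: w'.support :=
      List.IsInfix.trans ⟨[], [c], by simp⟩ hinf'
    have hbc' : [b, c] <:+: w'.support :=
      List.IsInfix.trans ⟨[a], [], by simp⟩ hinf'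
    obtain ⟨da', hda', hpa'⟩ := dart_of_infix w' hab'
    obtain ⟨db', hdb', hpb'⟩ := dart_of_infix w' hbc'
    have k1' := key p' hp' q' hq' w' hw' da' hda'
    have k2' := key p' hp' q' hq' w' hw' db' hdb'
    simp only [hpa'] at k1'
    simp only [hpb'] at k2'
    rcases k1 with ⟨ha0, hb1, -, heP⟩ | ⟨ha1, hb0, -, heQ⟩
    · replace k1' := k1'.resolve_right fun h => fin01 (ha0.symm.trans h.1)
      obtain ⟨-, -, -, heP'⟩ := k1'
      replace k2 := k2.resolve_left fun h => fin01 (h.1.symm.trans hb1)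
      obtain ⟨-, -, -, geQ⟩ := k2
      replace k2' := k2'.resolve_left fun h => fin01 (h.1.symm.trans hb1)
      obtain ⟨-, -, -, geQ'⟩ := k2'
      exact hne (by rw [same1 _ heP heP', same2 _ geQ geQ'])
    · replace k1' := k1'.resolve_left fun h => fin01 (h.1.symm.trans ha1)
      obtain ⟨-, -, -, heQ'⟩ := k1'
      replace k2 := k2.resolve_right fun h => fin01 (hb0.symm.trans h.1)
      obtain ⟨-, -, -, geP⟩ := k2
      replace k2' := k2'.resolve_right fun h => fin01 (hb0.symm.trans h.1)
      obtain ⟨-, -, -, geP'⟩ := k2'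
      exact hne (by rw [same1 _ geP geP', same2 _ heQ heQ'])
  · -- reversed case: impossible, since it would traverse an edge in both directions
    have hba' : [b, a] <:+: w'.support :=
      List.IsInfix.trans ⟨[c], [], by simp⟩ hinf'
    obtain ⟨da', hda', hpa'⟩ := dart_of_infix w' hba'
    have k1' := key p' hp' q' hq' w' hw' da' hda'
    simp only [hpa'] at k1'
    rcases k1 with ⟨ha0, hb1, -, heP⟩ | ⟨ha1, hb0, -, heQ⟩
    · replace k1' := k1'.resolve_left fun h => fin01 (h.1.symm.trans hb1)
      obtain ⟨-, -, hba, -⟩ := k1'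
      exact ((ρ p).adj_of_mem_edges heP).ne hba.symm
    · replace k1' := k1'.resolve_right fun h => fin01 (hb0.symm.trans h.1)
      obtain ⟨-, -, hba, -⟩ := k1'
      exact ((ρ q).adj_of_mem_edges heQ).ne hba.symm
end

section
/- Let G be a graph, P a family of vertex pairs, and suppose for each p ∈ P there is a designated edge set C_p ⊆ E(G) such that: (i) the sets {C_p} are pairwise disjoint, (ii) for each p = {s,t}, every (s,t)-path in G of length at most D + k uses at least one edge of C_p, and (iii) removing all edges in C_p for p ∈ T (any T ⊆ P) leaves distance at most D between the endpoints of every pair not in T. Then the 2^{|P|} subgraphs G_T = G − ∪_{p∈T} C_p are pairwise distinguishable: for T ≠ T', there is a pair {s,t} ∈ P with |dist_{G_T}(s,t) − dist_{G_{T'}}(s,t)| > k. -/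
private lemma key_lemma {V : Type*} (G : SimpleGraph V)
    (P : Finset (V × V)) (C : V × V → Set (Sym2 V)) (D k : ℕ)
    (hhit : ∀ p ∈ P, ∀ w : G.Walk p.1 p.2, w.length ≤ D + k → ∃ e ∈ C p, e ∈ w.edges)
    (hpres : ∀ T ⊆ (P : Set (V × V)), ∀ p ∈ P, p ∉ T →
      ∃ w : (G.deleteEdges (⋃ q ∈ T, C q)).Walk p.1 p.2, w.length ≤ D)
    (T T' : Set (V × V)) (hT : T ⊆ P) (hT' : T' ⊆ P)
    (p : V × V) (hpT : p ∈ T) (hpT' : p ∉ T') :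
    (k : ℕ∞) <
      max ((G.deleteEdges (⋃ q ∈ T, C q)).edist p.1 p.2)
          ((G.deleteEdges (⋃ q ∈ T', C q)).edist p.1 p.2) -
      min ((G.deleteEdges (⋃ q ∈ T, C q)).edist p.1 p.2)
          ((G.deleteEdges (⋃ q ∈ T', C q)).edist p.1 p.2) := by
  have hpP : p ∈ P := hT hpT
  set dT := (G.deleteEdges (⋃ q ∈ T, C q)).edist p.1 p.2 with hdT
  set dT' := (G.deleteEdges (⋃ q ∈ T', C q)).edist p.1 p.2 with hdT'
  -- dT' ≤ D
  obtain ⟨w', hw'⟩ := hpres T' hT' p hpP hpT'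
  have hle : dT' ≤ (D : ℕ∞) := le_trans (SimpleGraph.edist_le w') (by exact_mod_cast hw')
  -- dT > D + k
  have hgt : ((D : ℕ∞) + k) < dT := by
    by_contra hc
    push_neg at hc
    have hne : dT ≠ ⊤ := ne_top_of_le_ne_top (by simp [← Nat.cast_add]) hc
    obtain ⟨w, hw⟩ := SimpleGraph.exists_walk_of_edist_ne_top hne
    have hwlen : w.length ≤ D + k := by
      have : (w.length : ℕ∞) ≤ (D : ℕ∞) + k := hw ▸ hc
      exact_mod_cast this
    have hsub2 : ∀ e ∈ w.edges, e ∈ G.edgeSet := fun e he =>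
      (SimpleGraph.edgeSet_deleteEdges _ ▸ w.edges_subset_edgeSet he).1
    obtain ⟨e, heC, hew⟩ := hhit p hpP (w.transfer G hsub2)
      (by rwa [SimpleGraph.Walk.length_transfer])
    rw [SimpleGraph.Walk.edges_transfer] at hew
    have := w.edges_subset_edgeSet hew
    rw [SimpleGraph.edgeSet_deleteEdges] at this
    exact this.2 (Set.mem_biUnion hpT heC)
  have hmin : min dT dT' ≤ (D : ℕ∞) := le_trans (min_le_right _ _) hle
  have hmax : ((D : ℕ∞) + k) < max dT dT' := lt_of_lt_of_le hgt (le_max_left _ _)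
  rw [lt_tsub_iff_left]
  calc min dT dT' + (k : ℕ∞) ≤ (D : ℕ∞) + k := by exact add_le_add_left hmin _
    _ < max dT dT' := hmax

/-- The `2^{|P|}` subgraphs `G_T = G - ⋃_{p ∈ T} C_p` are pairwise distinguishable by some
pairwise distance (distances measured in `ℕ∞` via `SimpleGraph.edist`). -/
theorem deleted_subgraphs_distinguishable {V : Type*} (G : SimpleGraph V)
    (P : Finset (V × V)) (C : V × V → Set (Sym2 V)) (D k : ℕ)
    (hsub : ∀ p ∈ P, C p ⊆ G.edgeSet)
    (hdisj : ∀ p ∈ P, ∀ q ∈ P, p ≠ q → Disjoint (C p) (C q))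
    (hhit : ∀ p ∈ P, ∀ w : G.Walk p.1 p.2, w.length ≤ D + k → ∃ e ∈ C p, e ∈ w.edges)
    (hpres : ∀ T ⊆ (P : Set (V × V)), ∀ p ∈ P, p ∉ T →
      ∃ w : (G.deleteEdges (⋃ q ∈ T, C q)).Walk p.1 p.2, w.length ≤ D) :
    ∀ T ⊆ (P : Set (V × V)), ∀ T' ⊆ (P : Set (V × V)), T ≠ T' →
      ∃ p ∈ P,
        (k : ℕ∞) <
          max ((G.deleteEdges (⋃ q ∈ T, C q)).edist p.1 p.2)
              ((G.deleteEdges (⋃ q ∈ T', C q)).edist p.1 p.2) -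
          min ((G.deleteEdges (⋃ q ∈ T, C q)).edist p.1 p.2)
              ((G.deleteEdges (⋃ q ∈ T', C q)).edist p.1 p.2) := by
  intro T hT T' hT' hne
  rcases Set.symmDiff_nonempty.mpr hne with ⟨p, hp⟩
  rcases hp with ⟨hpT, hpT'⟩ | ⟨hpT', hpT⟩
  · exact ⟨p, hT hpT, key_lemma G P C D k hhit hpres T T' hT hT' p hpT hpT'⟩
  · refine ⟨p, hT' hpT', ?_⟩
    rw [max_comm, min_comm]
    exact key_lemma G P C D k hhit hpres T' T hT' hT p hpT' hpT
end
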